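/- arXiv:1106.4661 — 12 statements merged into one kernel-verified Lean document; each statement's English description precedes it below -/
import Mathlib

section
/- Let B be a complex Banach space, D ⊆ B a subspace, and L : D → B a linear map satisfying the dissipativity estimate of generators of contraction semigroups: ‖L x − γ x‖ ≥ γ‖x‖ for every γ > 0 and every x ∈ D. Then the null space and the range of L are transversal: ker L ∩ ran L = {0}. -/
/-- Let `B` be a complex Banach space, `D ⊆ B` a subspace and `L : D → B`
a linear map satisfying the dissipativity estimate of generators of contraction semigroups:
`‖L x - γ • x‖ ≥ γ * ‖x‖` for every `γ > 0` and every `x ∈ D`.  Then the null space and the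
range of `L` are transversal: `ker L ∩ ran L = {0}`. -/
theorem kernel_range_transversal
    {B : Type*} [NormedAddCommGroup B] [NormedSpace ℂ B] [CompleteSpace B]
    (D : Subspace ℂ B) (L : D →ₗ[ℂ] B)
    (hdiss : ∀ γ : ℝ, 0 < γ → ∀ x : D, γ * ‖(x : B)‖ ≤ ‖L x - γ • (x : B)‖) :
    ∀ x : D, L x = 0 → (∃ y : D, L y = (x : B)) → (x : B) = 0 := by
  intro x hLx hx
  obtain ⟨y, hy⟩ := hx
  have key : ∀ γ : ℝ, 0 < γ → ‖(x : B)‖ ≤ 2 * γ * ‖(y : B)‖ := by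
    intro γ hγ
    set w : D := x + (γ : ℂ) • y with hw
    have h1 := hdiss γ hγ w
    have hLw : L w = (γ : ℂ) • (x : B) := by
      simp [hw, map_add, map_smul, hLx, hy]
    have hwB : (w : B) = (x : B) + (γ : ℂ) • (y : B) := rfl
    have hsub : L w - γ • (w : B) = -((γ : ℂ) * (γ : ℂ)) • (y : B) := by
      rw [hLw, hwB, ← Complex.coe_smul]
      module
    have hnorm : ‖L w - γ • (w : B)‖ = γ * γ * ‖(y : B)‖ := by
      rw [hsub, norm_smul]
      simp [abs_of_pos hγ]
    rw [hnorm] at h1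
    have hwle : ‖(w : B)‖ ≤ γ * ‖(y : B)‖ := by
      have := (mul_le_mul_iff_right₀ hγ).mp (by linarith [h1] : γ * ‖(w : B)‖ ≤ γ * (γ * ‖(y : B)‖))
      exact this
    have hx' : (x : B) = (w : B) - (γ : ℂ) • (y : B) := by rw [hwB]; abel
    calc ‖(x : B)‖ = ‖(w : B) - (γ : ℂ) • (y : B)‖ := by rw [hx']
      _ ≤ ‖(w : B)‖ + ‖(γ : ℂ) • (y : B)‖ := norm_sub_le _ _
      _ ≤ γ * ‖(y : B)‖ + γ * ‖(y : B)‖ := by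
          refine add_le_add hwle ?_
          rw [norm_smul]; simp [abs_of_pos hγ]
      _ = 2 * γ * ‖(y : B)‖ := by ring
  have hle : ‖(x : B)‖ ≤ 0 := by
    by_contra h
    push_neg at h
    set γ := ‖(x : B)‖ / (2 * (2 * ‖(y : B)‖ + 1)) with hγdef
    have hγ : 0 < γ := by positivity
    have := key γ hγ
    have hy0 : 0 ≤ ‖(y : B)‖ := norm_nonneg _
    rw [hγdef] at this
    have h2 : 2 * (‖(x : B)‖ / (2 * (2 * ‖(y : B)‖ + 1))) * ‖(y : B)‖ < ‖(x : B)‖ := by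
      rw [mul_comm (2:ℝ), div_mul_eq_mul_div, div_mul_eq_mul_div, div_lt_iff₀ (by positivity)]
      nlinarith
    linarith
  have := norm_nonneg (x : B)
  have : ‖(x : B)‖ = 0 := le_antisymm hle this
  exact norm_eq_zero.mp this
end

section
/- Let P(s), 0 ≤ s ≤ 1, be a C¹ family of bounded projections on a complex Banach space B, and let T(s,s') be the associated parallel transport. Then T intertwines the projections: P(s) T(s,s') = T(s,s') P(s') for all 0 ≤ s', s ≤ 1. In particular T(s,s') maps ran P(s') into ran P(s) and ker P(s') into ker P(s). -/
open Set

theorem ring_aux_pti {R : Type*} [Ring R] (p q t r : R) (hp : p * p = p)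
    (hq : q * p + p * q = q) :
    (q * p - p * q) * (p * t - t * r) =
      (q * t + p * ((q * p - p * q) * t)) - ((q * p - p * q) * t * r + t * 0) := by
  have hpqp : p * q * p = 0 := by
    have h := congrArg (fun x => p * x) hq
    simp only [mul_add, ← mul_assoc, hp] at h
    exact add_right_cancel (by rw [h, zero_add] : p * q * p + p * q = 0 + p * q)
  have key : (q * p - p * q) * p = q + p * (q * p - p * q) := by
    rw [sub_mul, mul_assoc q p p, hp, hpqp, sub_zero, mul_sub, ← mul_assoc p q p, hpqp,
      ← mul_assoc p p q, hp, zero_sub, ← sub_eq_add_neg]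
    exact eq_sub_of_add_eq hq
  calc (q * p - p * q) * (p * t - t * r)
      = ((q * p - p * q) * p) * t - (q * p - p * q) * (t * r) := by
        rw [mul_sub, mul_assoc]
    _ = (q + p * (q * p - p * q)) * t - (q * p - p * q) * t * r := by
        rw [key, mul_assoc]
    _ = (q * t + p * ((q * p - p * q) * t)) - ((q * p - p * q) * t * r + t * 0) := by
        rw [add_mul, mul_assoc, mul_zero, add_zero]

/-- Let `P s`, `0 ≤ s ≤ 1`, be a `C¹` family of bounded projections on a
complex Banach space `B` and let `T s s'` be the associated parallel transport, i.e.
`T s' s' = 1` and `∂ₛ T s s' = [Ṗ s, P s] T s s'`.  Then `T` intertwines the projections: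
`P s ∘ T s s' = T s s' ∘ P s'`; in particular `T s s'` maps `ran (P s')` into `ran (P s)`
and `ker (P s')` into `ker (P s)`. -/
theorem parallel_transport_intertwines
    {B : Type*} [NormedAddCommGroup B] [NormedSpace ℂ B] [CompleteSpace B]
    (P P' : ℝ → B →L[ℂ] B) (T : ℝ → ℝ → B →L[ℂ] B)
    -- `P s` is a projection for every `s ∈ [0,1]`
    (hproj : ∀ s ∈ Icc (0:ℝ) 1, (P s).comp (P s) = P s)
    -- the family is `C¹`: `P'` is the derivative of `P` and is continuous
    (hP' : ∀ s ∈ Icc (0:ℝ) 1, HasDerivAt P (P' s) s)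
    (hP'cont : ContinuousOn P' (Icc (0:ℝ) 1))
    -- parallel transport: initial condition and transport equation
    (hTinit : ∀ s' ∈ Icc (0:ℝ) 1, T s' s' = 1)
    (hTode : ∀ s' ∈ Icc (0:ℝ) 1, ∀ s ∈ Icc (0:ℝ) 1,
      HasDerivAt (fun u => T u s')
        ((((P' s).comp (P s) - (P s).comp (P' s)).comp (T s s'))) s) :
    ∀ s ∈ Icc (0:ℝ) 1, ∀ s' ∈ Icc (0:ℝ) 1,
      (P s).comp (T s s') = (T s s').comp (P s') ∧
      (∀ x ∈ LinearMap.range (P s' : B →ₗ[ℂ] B), T s s' x ∈ LinearMap.range (P s : B →ₗ[ℂ] B)) ∧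
      (∀ x ∈ LinearMap.ker (P s' : B →ₗ[ℂ] B), T s s' x ∈ LinearMap.ker (P s : B →ₗ[ℂ] B)) := by
  -- the commutator `A t = [Ṗ t, P t]`, written multiplicatively
  set A : ℝ → B →L[ℂ] B := fun t => P' t * P t - P t * P' t with hA
  -- differentiating `P ∘ P = P` gives `Ṗ P + P Ṗ = Ṗ`
  have hid : ∀ t ∈ Icc (0:ℝ) 1, P' t * P t + P t * P' t = P' t := by
    intro t ht
    have h1 : HasDerivWithinAt (fun u => P u * P u)
        (P' t * P t + P t * P' t) (Icc (0:ℝ) 1) t :=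
      (hP' t ht).hasDerivWithinAt.mul (hP' t ht).hasDerivWithinAt
    have h2 : HasDerivWithinAt (fun u => P u * P u) (P' t) (Icc (0:ℝ) 1) t :=
      (hP' t ht).hasDerivWithinAt.congr (fun u hu => hproj u hu) (hproj t ht)
    have hu := uniqueDiffOn_Icc_zero_one t ht
    exact (h1.derivWithin hu).symm.trans (h2.derivWithin hu)
  intro s hs s' hs'
  -- the intertwining defect
  set F : ℝ → B →L[ℂ] B := fun u => P u * T u s' - T u s' * P s' with hF
  -- `F` solves the linear ODE `F' = A F`
  have hF' : ∀ t ∈ Icc (0:ℝ) 1, HasDerivAt F (A t * F t) t := by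
    intro t ht
    have h1 := (hP' t ht).mul (hTode s' hs' t ht)
    have h2 := (hTode s' hs' t ht).mul (hasDerivAt_const t (P s'))
    have h := h1.sub h2
    exact h.congr_deriv (ring_aux_pti (P t) (P' t) (T t s') (P s') (hproj t ht) (hid t ht)).symm
  have hFcont : ContinuousOn F (Icc (0:ℝ) 1) := fun t ht =>
    (hF' t ht).continuousAt.continuousWithinAt
  -- bound the coefficient on the compact interval
  have hPcont : ContinuousOn P (Icc (0:ℝ) 1) := fun t ht =>
    (hP' t ht).continuousAt.continuousWithinAt
  have hAcont : ContinuousOn A (Icc (0:ℝ) 1) :=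
    (hP'cont.mul hPcont).sub (hPcont.mul hP'cont)
  obtain ⟨C, hC⟩ := isCompact_Icc.exists_bound_of_continuousOn hAcont
  -- the (extended) vector field
  set Aext : ℝ → B →L[ℂ] B := fun t => A (projIcc (0:ℝ) 1 zero_le_one t : ℝ) with hAext
  set v : ℝ → (B →L[ℂ] B) → (B →L[ℂ] B) := fun t X => Aext t * X with hv
  have hAextbd : ∀ t, ‖Aext t‖ ≤ C := fun t => hC _ (projIcc (0:ℝ) 1 zero_le_one t).2
  have hvlip : ∀ t, LipschitzOnWith C.toNNReal (v t) univ := by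
    intro t
    apply LipschitzWith.lipschitzOnWith
    apply LipschitzWith.of_dist_le_mul
    intro X Y
    rw [dist_eq_norm, dist_eq_norm, hv]
    simp only
    rw [← mul_sub]
    calc ‖Aext t * (X - Y)‖ ≤ ‖Aext t‖ * ‖X - Y‖ := norm_mul_le _ _
      _ ≤ ↑C.toNNReal * ‖X - Y‖ := by
          apply mul_le_mul_of_nonneg_right _ (norm_nonneg _)
          exact le_trans (hAextbd t) (Real.le_coe_toNNReal C)
  have hveq : ∀ t ∈ Icc (0:ℝ) 1, v t (F t) = A t * F t := by
    intro t ht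
    rw [hv]
    simp only [hAext, projIcc_of_mem zero_le_one ht]
  have hv0 : ∀ t, v t 0 = 0 := by
    intro t; rw [hv]; simp only; rw [mul_zero]
  -- initial condition `F s' = 0`
  have hFinit : F s' = 0 := by
    rw [hF]; simp only [hTinit s' hs']
    simp
  -- uniqueness of solutions of the ODE gives `F = 0` on `[0,1]`
  have hFzero : F s = 0 := by
    rcases le_total s' s with hle | hle
    · have hsub : Icc s' s ⊆ Icc (0:ℝ) 1 := Icc_subset_Icc hs'.1 hs.2
      have := ODE_solution_unique_of_mem_Icc_right (v := v) (s := fun _ => univ)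
        (K := C.toNNReal) (fun t _ => hvlip t)
        (hFcont.mono hsub)
        (fun t ht => by
          rw [hveq t (hsub (mem_Icc_of_Ico ht))]
          exact (hF' t (hsub (mem_Icc_of_Ico ht))).hasDerivWithinAt)
        (fun _ _ => mem_univ _)
        continuousOn_const
        (fun t _ => by
          rw [hv0 t]
          exact (hasDerivWithinAt_const t _ (0 : B →L[ℂ] B)))
        (fun _ _ => mem_univ _)
        (by simpa using hFinit)
      have := this ⟨hle, le_refl s⟩
      simpa using this
    · have hsub : Icc s s' ⊆ Icc (0:ℝ) 1 := Icc_subset_Icc hs.1 hs'.2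
      have := ODE_solution_unique_of_mem_Icc_left (v := v) (s := fun _ => univ)
        (K := C.toNNReal) (fun t _ => hvlip t)
        (hFcont.mono hsub)
        (fun t ht => by
          rw [hveq t (hsub (mem_Icc_of_Ioc ht))]
          exact (hF' t (hsub (mem_Icc_of_Ioc ht))).hasDerivWithinAt)
        (fun _ _ => mem_univ _)
        continuousOn_const
        (fun t _ => by
          rw [hv0 t]
          exact (hasDerivWithinAt_const t _ (0 : B →L[ℂ] B)))
        (fun _ _ => mem_univ _)
        (by simpa using hFinit)
      have := this ⟨le_refl s, hle⟩
      simpa using this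
  have heq : (P s).comp (T s s') = (T s s').comp (P s') := by
    have h := hFzero
    rw [hF] at h
    simp only [sub_eq_zero] at h
    exact h
  have heq' : ∀ x, P s (T s s' x) = T s s' (P s' x) := by
    intro x
    have := congrArg (fun f : B →L[ℂ] B => f x) heq
    simpa using this
  refine ⟨heq, ?_, ?_⟩
  · rintro x ⟨y, rfl⟩
    exact ⟨T s s' y, heq' y⟩
  · intro x hx
    rw [LinearMap.mem_ker] at hx ⊢
    have hx' : P s' x = 0 := hx
    calc (P s) (T s s' x) = T s s' (P s' x) := heq' x
      _ = 0 := by rw [hx']; simp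
end

section
/- Let P(s), 0 ≤ s ≤ 1, be a C¹ family of bounded projections on a complex Banach space B with parallel transport T(s,s'), and let x : [0,1] → B be a C¹ section of the bundle of ranges, i.e. x(s) ∈ ran P(s) for all s. Then x(s) = T(s,0)x(0) for all s ∈ [0,1] if and only if the projected velocity vanishes: P(s)ẋ(s) = 0 for all s ∈ [0,1]. -/
open Set

/-- Let `P s`, `0 ≤ s ≤ 1`, be a `C¹` family of bounded projections on a
complex Banach space `B` with parallel transport `T s s'`, and let `x : [0,1] → B` be a `C¹`
section of the bundle of ranges, i.e. `x s ∈ ran (P s)` for all `s`.  Then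
`x s = T s 0 (x 0)` for all `s ∈ [0,1]` if and only if the projected velocity vanishes:
`P s (ẋ s) = 0` for all `s ∈ [0,1]`. -/
theorem parallel_transport_section_iff
    {B : Type*} [NormedAddCommGroup B] [NormedSpace ℂ B] [CompleteSpace B]
    (P P' : ℝ → B →L[ℂ] B) (T : ℝ → ℝ → B →L[ℂ] B)
    -- `P s` is a projection for every `s ∈ [0,1]`
    (hproj : ∀ s ∈ Icc (0:ℝ) 1, (P s).comp (P s) = P s)
    -- the family is `C¹`: `P'` is the derivative of `P` and is continuous
    (hP' : ∀ s ∈ Icc (0:ℝ) 1, HasDerivAt P (P' s) s)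
    (hP'cont : ContinuousOn P' (Icc (0:ℝ) 1))
    -- parallel transport: initial condition and transport equation
    (hTinit : ∀ s' ∈ Icc (0:ℝ) 1, T s' s' = 1)
    (hTode : ∀ s' ∈ Icc (0:ℝ) 1, ∀ s ∈ Icc (0:ℝ) 1,
      HasDerivAt (fun u => T u s')
        ((((P' s).comp (P s) - (P s).comp (P' s)).comp (T s s'))) s)
    -- `x` is a `C¹` section of the bundle of ranges of the projections
    (x x' : ℝ → B)
    (hx' : ∀ s ∈ Icc (0:ℝ) 1, HasDerivAt x (x' s) s)
    (hx'cont : ContinuousOn x' (Icc (0:ℝ) 1))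
    (hsec : ∀ s ∈ Icc (0:ℝ) 1, x s ∈ LinearMap.range (P s : B →ₗ[ℂ] B)) :
    (∀ s ∈ Icc (0:ℝ) 1, x s = T s 0 (x 0)) ↔
      (∀ s ∈ Icc (0:ℝ) 1, P s (x' s) = 0) := by
  have h01 : (0:ℝ) ∈ Icc (0:ℝ) 1 := ⟨le_refl 0, zero_le_one⟩
  have hUD : ∀ s ∈ Icc (0:ℝ) 1, UniqueDiffWithinAt ℝ (Icc (0:ℝ) 1) s :=
    fun s hs => (uniqueDiffOn_Icc one_pos) s hs
  set A : ℝ → B →L[ℂ] B := fun t => ((P' t).comp (P t) - (P t).comp (P' t)) with hA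
  -- applying a derivative of an operator family to a constant vector
  have happ : ∀ {C : ℝ → B →L[ℂ] B} {C' : B →L[ℂ] B} {s : ℝ}, HasDerivAt C C' s →
      ∀ z : B, HasDerivAt (fun u => C u z) (C' z) s := by
    intro C C' s h z
    exact ((ContinuousLinearMap.apply ℂ B z).restrictScalars ℝ).hasFDerivAt.comp_hasDerivAt s h
  -- P t (x t) = x t
  have hPx : ∀ s ∈ Icc (0:ℝ) 1, P s (x s) = x s := by
    intro s hs
    obtain ⟨y, hy⟩ := hsec s hs
    rw [← hy]
    have := congrArg (fun f : B →L[ℂ] B => f y) (hproj s hs)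
    simpa using this
  have hPcont : ContinuousOn P (Icc (0:ℝ) 1) :=
    fun s hs => (hP' s hs).continuousAt.continuousWithinAt
  have hxcont : ContinuousOn x (Icc (0:ℝ) 1) :=
    fun s hs => (hx' s hs).continuousAt.continuousWithinAt
  -- Leibniz rule for P ∘ P = P
  have hPP' : ∀ s ∈ Icc (0:ℝ) 1,
      (P' s).comp (P s) + (P s).comp (P' s) = P' s := by
    intro s hs
    have h1 : HasDerivWithinAt (fun u => (P u).comp (P u))
        ((P' s).comp (P s) + (P s).comp (P' s)) (Icc (0:ℝ) 1) s := by
      have := ((hP' s hs).mul (hP' s hs)).hasDerivWithinAt (s := Icc (0:ℝ) 1)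
      exact this
    have h2 : HasDerivWithinAt (fun u => (P u).comp (P u)) (P' s) (Icc (0:ℝ) 1) s :=
      (hP' s hs).hasDerivWithinAt.congr (fun t ht => hproj t ht) (hproj s hs)
    exact (hUD s hs).eq_deriv _ h1 h2
  have hPP'P : ∀ s ∈ Icc (0:ℝ) 1, (P s).comp ((P' s).comp (P s)) = 0 := by
    intro s hs
    have h2 := congrArg (fun f : B →L[ℂ] B => f.comp (P s)) (hPP' s hs)
    simp only [ContinuousLinearMap.add_comp, ContinuousLinearMap.comp_assoc,
      hproj s hs] at h2
    exact add_eq_left.mp h2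
  have hPP'x : ∀ s ∈ Icc (0:ℝ) 1, P s (P' s (x s)) = 0 := by
    intro s hs
    conv_lhs => rw [← hPx s hs]
    have := congrArg (fun f : B →L[ℂ] B => f (x s)) (hPP'P s hs)
    simpa using this
  -- derivative of s ↦ P s (x s)
  have hxder : ∀ s ∈ Icc (0:ℝ) 1, P' s (x s) + P s (x' s) = x' s := by
    intro s hs
    have hQ : HasDerivAt (fun u => (P u).restrictScalars ℝ)
        ((P' s).restrictScalars ℝ) s :=
      ((ContinuousLinearMap.restrictScalarsIsometry ℂ B B ℝ
        ℝ).toContinuousLinearMap).hasFDerivAt.comp_hasDerivAt s (hP' s hs)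
    have h1 : HasDerivAt (fun u => P u (x u)) (P' s (x s) + P s (x' s)) s := by
      have := hQ.clm_apply (hx' s hs)
      exact this
    have h2 : HasDerivWithinAt (fun u => P u (x u)) (x' s) (Icc (0:ℝ) 1) s :=
      (hx' s hs).hasDerivWithinAt.congr (fun t ht => hPx t ht) (hPx s hs)
    exact (hUD s hs).eq_deriv _ h1.hasDerivWithinAt h2
  -- derivative of the transported vector
  have hg' : ∀ s ∈ Icc (0:ℝ) 1,
      HasDerivAt (fun u => T u 0 (x 0)) (A s (T s 0 (x 0))) s := by
    intro s hs
    have := happ (hTode 0 h01 s hs) (x 0)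
    simpa [hA] using this
  constructor
  · -- if x is the transported section, then P x' = 0
    intro h s hs
    have hder : x' s = A s (x s) := by
      have h1 : HasDerivWithinAt x (A s (T s 0 (x 0))) (Icc (0:ℝ) 1) s :=
        ((hg' s hs).hasDerivWithinAt).congr (fun t ht => h t ht) (h s hs)
      have := (hUD s hs).eq_deriv _ (hx' s hs).hasDerivWithinAt h1
      rw [this, ← h s hs]
    rw [hder]
    simp only [hA, ContinuousLinearMap.sub_apply, ContinuousLinearMap.comp_apply, map_sub]
    have hPPz : P s (P s (P' s (x s))) = P s (P' s (x s)) := by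
      have := congrArg (fun f : B →L[ℂ] B => f (P' s (x s))) (hproj s hs)
      simpa using this
    rw [hPx s hs, hPPz, hPP'x s hs, sub_zero]
  · -- conversely, uniqueness of ODE solutions
    intro h
    have hxA : ∀ s ∈ Icc (0:ℝ) 1, x' s = A s (x s) := by
      intro s hs
      have h1 := hxder s hs
      rw [h s hs, add_zero] at h1
      simp only [hA, ContinuousLinearMap.sub_apply, ContinuousLinearMap.comp_apply]
      rw [hPx s hs, hPP'x s hs, sub_zero, h1]
    -- clamp time to [0,1]
    set proj : ℝ → ℝ := fun t => max 0 (min t 1) with hprojdef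
    have hproj_mem : ∀ t, proj t ∈ Icc (0:ℝ) 1 :=
      fun t => ⟨le_max_left _ _, max_le zero_le_one (min_le_right _ _)⟩
    have hproj_eq : ∀ t ∈ Icc (0:ℝ) 1, proj t = t := by
      intro t ht
      simp [hprojdef, min_eq_left ht.2, max_eq_right ht.1]
    -- uniform Lipschitz bound
    have hAcont : ContinuousOn A (Icc (0:ℝ) 1) := by
      have : ContinuousOn (fun t => P' t * P t - P t * P' t) (Icc (0:ℝ) 1) :=
        (hP'cont.mul hPcont).sub (hPcont.mul hP'cont)
      exact this
    obtain ⟨C, hC⟩ := isCompact_Icc.exists_bound_of_continuousOn hAcont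
    set K : NNReal := ⟨max C 0, le_max_right _ _⟩ with hK
    have hv : ∀ t, LipschitzOnWith K (fun y => A (proj t) y) univ := by
      intro t
      apply LipschitzWith.lipschitzOnWith
      apply (A (proj t)).lipschitz.weaken
      have h1 : ‖A (proj t)‖ ≤ max C 0 := le_trans (hC _ (hproj_mem t)) (le_max_left _ _)
      exact h1
    have heq : EqOn x (fun u => T u 0 (x 0)) (Icc (0:ℝ) 1) := by
      apply ODE_solution_unique_of_mem_Icc_right (v := fun t y => A (proj t) y)
        (s := fun _ => (univ : Set B)) (fun t _ => hv t) hxcont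
      · intro t ht
        have ht' : t ∈ Icc (0:ℝ) 1 := Ico_subset_Icc_self ht
        have := (hx' t ht').hasDerivWithinAt (s := Ici t)
        rw [hxA t ht'] at this
        rwa [hproj_eq t ht']
      · exact fun t _ => mem_univ _
      · exact fun u hu => (hg' u hu).continuousAt.continuousWithinAt
      · intro t ht
        have ht' : t ∈ Icc (0:ℝ) 1 := Ico_subset_Icc_self ht
        have := ((hg' t ht').hasDerivWithinAt (s := Ici t))
        rwa [hproj_eq t ht']
      · exact fun t _ => mem_univ _
      · simp [hTinit 0 h01]
    exact fun s hs => heq hs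
end

section
/- Let P(s), 0 ≤ s ≤ 1, be a C¹ family of bounded projections of rank 1 on a complex Banach space B, and suppose ker P(s) is independent of s. Then Ṗ(s) vanishes on ker P(s) (i.e. Ṗ(s)y = 0 for every y ∈ ker P(s)), and P(s) = T(s,s') P(s') for all s, s' ∈ [0,1], where T is the parallel transport associated to the family P(s). -/
open Set

/-- Let `P s`, `0 ≤ s ≤ 1`, be a `C¹` family of bounded rank-one projections
on a complex Banach space `B`, and suppose `ker (P s)` is independent of `s`.  Then `Ṗ s`
vanishes on `ker (P s)`, and `P s = T s s' ∘ P s'` for all `s, s' ∈ [0,1]`, where `T` is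
the parallel transport associated to the family. -/
theorem rank_one_projection_parallel_transport
    {B : Type*} [NormedAddCommGroup B] [NormedSpace ℂ B] [CompleteSpace B]
    (P P' : ℝ → B →L[ℂ] B) (T : ℝ → ℝ → B →L[ℂ] B)
    -- `P s` is a projection for every `s ∈ [0,1]`
    (hproj : ∀ s ∈ Icc (0:ℝ) 1, (P s).comp (P s) = P s)
    -- rank one
    (hrank : ∀ s ∈ Icc (0:ℝ) 1, Module.finrank ℂ (LinearMap.range (P s : B →ₗ[ℂ] B)) = 1)
    -- the family is `C¹`: `P'` is the derivative of `P` and is continuous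
    (hP' : ∀ s ∈ Icc (0:ℝ) 1, HasDerivAt P (P' s) s)
    (hP'cont : ContinuousOn P' (Icc (0:ℝ) 1))
    -- the kernel of `P s` does not depend on `s`
    (hker : ∀ s ∈ Icc (0:ℝ) 1, ∀ s' ∈ Icc (0:ℝ) 1,
      LinearMap.ker (P s : B →ₗ[ℂ] B) = LinearMap.ker (P s' : B →ₗ[ℂ] B))
    -- parallel transport: initial condition and transport equation
    (hTinit : ∀ s' ∈ Icc (0:ℝ) 1, T s' s' = 1)
    (hTode : ∀ s' ∈ Icc (0:ℝ) 1, ∀ s ∈ Icc (0:ℝ) 1,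
      HasDerivAt (fun u => T u s')
        ((((P' s).comp (P s) - (P s).comp (P' s)).comp (T s s'))) s) :
    (∀ s ∈ Icc (0:ℝ) 1, ∀ y ∈ LinearMap.ker (P s : B →ₗ[ℂ] B), P' s y = 0) ∧
    (∀ s ∈ Icc (0:ℝ) 1, ∀ s' ∈ Icc (0:ℝ) 1, P s = (T s s').comp (P s')) := by
  have hUD : UniqueDiffOn ℝ (Icc (0:ℝ) 1) := uniqueDiffOn_Icc zero_lt_one
  -- restrict scalars to ℝ
  set R : (B →L[ℂ] B) →L[ℝ] (B →L[ℝ] B) :=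
    (ContinuousLinearMap.restrictScalarsIsometry ℂ B B ℝ ℝ).toContinuousLinearMap with hR
  set Pr : ℝ → B →L[ℝ] B := fun u => R (P u) with hPrdef
  set P'r : ℝ → B →L[ℝ] B := fun u => R (P' u) with hP'rdef
  have hPr' : ∀ s ∈ Icc (0:ℝ) 1, HasDerivAt Pr (P'r s) s := fun s hs =>
    R.hasFDerivAt.comp_hasDerivAt s (hP' s hs)
  have happly : ∀ (A : B →L[ℂ] B) (w : B), R A w = A w := fun _ _ => rfl
  have hprojr : ∀ s ∈ Icc (0:ℝ) 1, (Pr s).comp (Pr s) = Pr s := by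
    intro s hs
    ext w
    show P s (P s w) = P s w
    exact congrArg (fun A : B →L[ℂ] B => A w) (hproj s hs)
  -- Part 1 : P' s vanishes on ker (P s)
  have part1 : ∀ s ∈ Icc (0:ℝ) 1, ∀ y ∈ LinearMap.ker (P s : B →ₗ[ℂ] B), P' s y = 0 := by
    intro s hs y hy
    have h1 : HasDerivWithinAt (fun u => Pr u y) (P'r s y) (Icc (0:ℝ) 1) s := by
      have : HasDerivAt (fun u => Pr u y) (P'r s y) s := by
        simpa using (hPr' s hs).clm_apply (hasDerivAt_const s y)
      exact this.hasDerivWithinAt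
    have hzero : ∀ u ∈ Icc (0:ℝ) 1, Pr u y = 0 := by
      intro u hu
      have : y ∈ LinearMap.ker (P u : B →ₗ[ℂ] B) := by rw [hker u hu s hs]; exact hy
      exact this
    have h2 : HasDerivWithinAt (fun u => Pr u y) 0 (Icc (0:ℝ) 1) s :=
      (hasDerivWithinAt_const s (Icc (0:ℝ) 1) (0:B)).congr hzero (hzero s hs)
    exact (h1.derivWithin (hUD s hs)).symm.trans (h2.derivWithin (hUD s hs))
  -- the algebraic identity P ∘ P' ∘ P = 0
  have hPPP : ∀ s ∈ Icc (0:ℝ) 1, (Pr s).comp ((P'r s).comp (Pr s)) = 0 := by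
    intro s hs
    have hQ : HasDerivWithinAt (fun u => (Pr u).comp (Pr u))
        ((P'r s).comp (Pr s) + (Pr s).comp (P'r s)) (Icc (0:ℝ) 1) s :=
      ((hPr' s hs).clm_comp (hPr' s hs)).hasDerivWithinAt
    have h2 : HasDerivWithinAt (fun u => (Pr u).comp (Pr u)) (P'r s) (Icc (0:ℝ) 1) s :=
      (hPr' s hs).hasDerivWithinAt.congr (fun u hu => hprojr u hu) (hprojr s hs)
    have key : (P'r s).comp (Pr s) + (Pr s).comp (P'r s) = P'r s :=
      (hQ.derivWithin (hUD s hs)).symm.trans (h2.derivWithin (hUD s hs))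
    ext w
    have happ : Pr s (Pr s w) = Pr s w := congrArg (fun A : B →L[ℝ] B => A w) (hprojr s hs)
    have kw := congrArg (fun A : B →L[ℝ] B => A (Pr s w)) key
    simp only [ContinuousLinearMap.add_apply, ContinuousLinearMap.comp_apply] at kw
    rw [happ] at kw
    have hz : Pr s (P'r s (Pr s w)) = 0 := by
      have := kw
      rw [add_eq_left] at this
      exact this
    simpa [ContinuousLinearMap.comp_apply] using hz
  -- the commutator and the associated vector field
  set D : ℝ → B →L[ℝ] B := fun u => (P'r u).comp (Pr u) - (Pr u).comp (P'r u) with hD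
  have hPcont : ContinuousOn Pr (Icc (0:ℝ) 1) :=
    R.continuous.comp_continuousOn (fun u hu => (hP' u hu).continuousAt.continuousWithinAt)
  have hP'rcont : ContinuousOn P'r (Icc (0:ℝ) 1) := R.continuous.comp_continuousOn hP'cont
  have hDcont : ContinuousOn D (Icc (0:ℝ) 1) :=
    (hP'rcont.clm_comp hPcont).sub (hPcont.clm_comp hP'rcont)
  obtain ⟨C, hC⟩ := isCompact_Icc.exists_bound_of_continuousOn hDcont
  have hC0 : 0 ≤ C := le_trans (norm_nonneg _) (hC 0 ⟨le_refl 0, zero_le_one⟩)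
  set Kc : NNReal := ⟨C, hC0⟩ with hKc
  set v : ℝ → B → B := fun t x => D (projIcc (0:ℝ) 1 zero_le_one t) x with hv
  have hvLip : ∀ t, LipschitzWith Kc (v t) := by
    intro t
    refine (D (projIcc (0:ℝ) 1 zero_le_one t)).lipschitz.weaken ?_
    have := hC _ (projIcc (0:ℝ) 1 zero_le_one t).2
    rw [← NNReal.coe_le_coe]; exact this
  have hveq : ∀ t ∈ Icc (0:ℝ) 1, ∀ x : B, v t x = D t x := by
    intro t ht x
    simp only [hv, projIcc_of_mem zero_le_one ht]
  -- main pointwise identity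
  have main : ∀ s' ∈ Icc (0:ℝ) 1, ∀ x : B, ∀ s ∈ Icc (0:ℝ) 1,
      P s (P s' x) = T s s' (P s' x) := by
    intro s' hs' x s hs
    set v0 : B := P s' x with hv0
    set f : ℝ → B := fun u => Pr u v0 with hf
    set g : ℝ → B := fun u => R (T u s') v0 with hg
    -- f solves the ODE at every point of Icc 0 1
    have hfd : ∀ u ∈ Icc (0:ℝ) 1, HasDerivAt f (v u (f u)) u := by
      intro u hu
      have h1 : HasDerivAt f (P'r u v0) u := by
        simpa [hf] using (hPr' u hu).clm_apply (hasDerivAt_const u v0)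
      have happ : Pr u (Pr u v0) = Pr u v0 :=
        congrArg (fun A : B →L[ℝ] B => A v0) (hprojr u hu)
      have hkermem : P u v0 - v0 ∈ LinearMap.ker (P u : B →ₗ[ℂ] B) := by
        have e : P u (P u v0) = P u v0 := happ
        simp [LinearMap.mem_ker, map_sub, e]
      have hPP : P'r u (Pr u v0) = P'r u v0 := by
        have h0 := part1 u hu _ hkermem
        have h0' : P' u (P u v0) - P' u v0 = 0 := by rw [← map_sub]; exact h0
        exact sub_eq_zero.mp h0'
      have hP0 : Pr u (P'r u (Pr u v0)) = 0 := by
        have e := congrArg (fun A : B →L[ℝ] B => A v0) (hPPP u hu)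
        simpa using e
      have hval : v u (f u) = P'r u v0 := by
        rw [hveq u hu]
        show P'r u (Pr u (Pr u v0)) - Pr u (P'r u (Pr u v0)) = P'r u v0
        rw [hP0, happ, hPP, sub_zero]
      rw [hval]; exact h1
    -- g solves the ODE at every point of Icc 0 1
    have hgd : ∀ u ∈ Icc (0:ℝ) 1, HasDerivAt g (v u (g u)) u := by
      intro u hu
      have hTr : HasDerivAt (fun w => R (T w s'))
          (R (((P' u).comp (P u) - (P u).comp (P' u)).comp (T u s'))) u :=
        R.hasFDerivAt.comp_hasDerivAt u (hTode s' hs' u hu)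
      have h1 : HasDerivAt g
          (R (((P' u).comp (P u) - (P u).comp (P' u)).comp (T u s')) v0) u := by
        simpa [hg] using hTr.clm_apply (hasDerivAt_const u v0)
      have hval : v u (g u) =
          R (((P' u).comp (P u) - (P u).comp (P' u)).comp (T u s')) v0 := by
        rw [hveq u hu]; rfl
      rw [hval]; exact h1
    -- initial condition
    have hinit : f s' = g s' := by
      have e : P s' (P s' x) = P s' x :=
        congrArg (fun A : B →L[ℂ] B => A x) (hproj s' hs')
      show P s' v0 = T s' s' v0
      rw [hTinit s' hs', hv0, e]
      rfl
    -- continuity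
    have hfc : ContinuousOn f (Icc (0:ℝ) 1) := fun u hu =>
      (hfd u hu).continuousAt.continuousWithinAt
    have hgc : ContinuousOn g (Icc (0:ℝ) 1) := fun u hu =>
      (hgd u hu).continuousAt.continuousWithinAt
    -- uniqueness of ODE solutions in both time directions
    have hfg : f s = g s := by
      rcases le_total s' s with hcase | hcase
      · have hsub : Icc s' s ⊆ Icc (0:ℝ) 1 := Icc_subset_Icc hs'.1 hs.2
        have := ODE_solution_unique_of_mem_Icc_right
          (fun t _ => (hvLip t).lipschitzOnWith (s := univ))
          (hfc.mono hsub)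
          (fun t ht => ((hfd t (hsub (Ico_subset_Icc_self ht))).hasDerivWithinAt))
          (fun t _ => mem_univ _)
          (hgc.mono hsub)
          (fun t ht => ((hgd t (hsub (Ico_subset_Icc_self ht))).hasDerivWithinAt))
          (fun t _ => mem_univ _)
          hinit
        exact this ⟨hcase, le_refl s⟩
      · have hsub : Icc s s' ⊆ Icc (0:ℝ) 1 := Icc_subset_Icc hs.1 hs'.2
        have := ODE_solution_unique_of_mem_Icc_left
          (fun t _ => (hvLip t).lipschitzOnWith (s := univ))
          (hfc.mono hsub)
          (fun t ht => ((hfd t (hsub (Ioc_subset_Icc_self ht))).hasDerivWithinAt))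
          (fun t _ => mem_univ _)
          (hgc.mono hsub)
          (fun t ht => ((hgd t (hsub (Ioc_subset_Icc_self ht))).hasDerivWithinAt))
          (fun t _ => mem_univ _)
          hinit
        exact this ⟨le_refl s, hcase⟩
    exact hfg
  refine ⟨part1, ?_⟩
  intro s hs s' hs'
  ext x
  have hmem : x - P s' x ∈ LinearMap.ker (P s : B →ₗ[ℂ] B) := by
    rw [hker s hs s' hs']
    have e : P s' (P s' x) = P s' x :=
      congrArg (fun A : B →L[ℂ] B => A x) (hproj s' hs')
    simp [LinearMap.mem_ker, map_sub, e]
  have hk : P s (x - P s' x) = 0 := hmem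
  have e1 : P s x = P s (P s' x) := by
    rw [map_sub] at hk
    exact sub_eq_zero.mp hk
  rw [ContinuousLinearMap.comp_apply, e1]
  exact main s' hs' x s hs
end

section
/- Decoupling of slow and fast variables. Let B be a complex Banach space and for each s ∈ [0,1] let L(s), P(s), A(s) be bounded operators on B such that: P(s) is a projection with ran P(s) = ker L(s) and ran(1−P(s)) = ran L(s); A(s) satisfies A(s)L(s) = L(s)A(s) = 1 − P(s) and A(s)P(s) = P(s)A(s) = 0; s ↦ L(s), P(s), A(s) are C² in norm. Let T(s,s') be the parallel transport of the family P(s), and let U_ε(s,s') be a propagator satisfying ε ∂_s U_ε(s,s') = L(s)U_ε(s,s'), U_ε(s,s) = 1 and ‖U_ε(s,s')‖ ≤ 1. Then there exists a constant C, depending only on the family, such that for all ε ∈ (0,1], all x₀ ∈ B, and all s ∈ [0,1], the solution x(s) = U_ε(s,0)x₀ of ε ẋ = L(s)x satisfies ‖P(s)x(s) − T(s,0)P(0)x₀‖ ≤ C ε ‖x₀‖. -/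
open Set

lemma gronwallBound_le_mul_exp {δ K ε t : ℝ} (hK : 0 ≤ K) (hε : 0 ≤ ε) :
    gronwallBound δ K ε t ≤ (δ + ε * t) * Real.exp (K * t) := by
  rcases eq_or_lt_of_le hK with h0 | hpos
  · rw [gronwallBound, if_pos h0.symm, ← h0, zero_mul, Real.exp_zero, mul_one]
  · rw [gronwallBound, if_neg (ne_of_gt hpos)]
    have h1 : Real.exp (K * t) - 1 ≤ K * t * Real.exp (K * t) := by
      have h := Real.add_one_le_exp (-(K * t))
      rw [Real.exp_neg] at h
      have h' := mul_le_mul_of_nonneg_right h (Real.exp_pos (K * t)).le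
      rw [inv_mul_cancel₀ (Real.exp_pos (K * t)).ne'] at h'
      nlinarith [Real.exp_pos (K * t)]
    have h2 : ε / K * (Real.exp (K * t) - 1) ≤ ε * t * Real.exp (K * t) := by
      rw [div_mul_eq_mul_div, div_le_iff₀ hpos]
      nlinarith [Real.exp_pos (K * t)]
    nlinarith [Real.exp_pos (K * t)]


set_option maxHeartbeats 1000000 in
/-- **Decoupling of slow and fast variables.**  Let `L s` be a `C²` family of
bounded operators on a complex Banach space `B` with spectral projections `P s` onto
`ker (L s)` along `ran (L s)`, reduced inverses `A s`, parallel transport `T`, and a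
contraction propagator `U ε`.  Then there is a constant `C`, depending only on the family,
such that the solution `x s = U ε s 0 x₀` of `ε ẋ = L s x` satisfies
`‖P s (x s) − T s 0 (P 0 x₀)‖ ≤ C ε ‖x₀‖` for all `ε ∈ (0,1]`, `x₀ ∈ B`, `s ∈ [0,1]`. -/
theorem decoupling_slow_fast
    {B : Type*} [NormedAddCommGroup B] [NormedSpace ℂ B] [CompleteSpace B]
    (L P P' A : ℝ → B →L[ℂ] B) (T : ℝ → ℝ → B →L[ℂ] B)
    (U : ℝ → ℝ → ℝ → B →L[ℂ] B)
    -- `P s` is a projection onto `ker (L s)` along `ran (L s)`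
    (hproj : ∀ s ∈ Icc (0:ℝ) 1, (P s).comp (P s) = P s)
    (hranP : ∀ s ∈ Icc (0:ℝ) 1, LinearMap.range (P s : B →ₗ[ℂ] B) = LinearMap.ker (L s : B →ₗ[ℂ] B))
    (hranQ : ∀ s ∈ Icc (0:ℝ) 1, LinearMap.range (((1 - P s : B →L[ℂ] B) : B →ₗ[ℂ] B)) = LinearMap.range (L s : B →ₗ[ℂ] B))
    -- `A s` is the reduced inverse `L s ⁻¹`
    (hAL : ∀ s ∈ Icc (0:ℝ) 1, (A s).comp (L s) = 1 - P s)
    (hLA : ∀ s ∈ Icc (0:ℝ) 1, (L s).comp (A s) = 1 - P s)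
    (hAP : ∀ s ∈ Icc (0:ℝ) 1, (A s).comp (P s) = 0)
    (hPA : ∀ s ∈ Icc (0:ℝ) 1, (P s).comp (A s) = 0)
    -- the families are `C²` in norm, and `P'` is the derivative of `P`
    (hLsmooth : ContDiffOn ℝ 2 L (Icc (0:ℝ) 1))
    (hPsmooth : ContDiffOn ℝ 2 P (Icc (0:ℝ) 1))
    (hAsmooth : ContDiffOn ℝ 2 A (Icc (0:ℝ) 1))
    (hP' : ∀ s ∈ Icc (0:ℝ) 1, HasDerivAt P (P' s) s)
    -- parallel transport of the family `P`
    (hTinit : ∀ s' ∈ Icc (0:ℝ) 1, T s' s' = 1)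
    (hTode : ∀ s' ∈ Icc (0:ℝ) 1, ∀ s ∈ Icc (0:ℝ) 1,
      HasDerivAt (fun u => T u s')
        ((((P' s).comp (P s) - (P s).comp (P' s)).comp (T s s'))) s)
    -- the propagator `U ε`, a contraction solving `ε ∂ₛ U ε s s' = L s ∘ U ε s s'`
    (hUinit : ∀ ε > (0:ℝ), ∀ s ∈ Icc (0:ℝ) 1, U ε s s = 1)
    (hUnorm : ∀ ε > (0:ℝ), ∀ s' ∈ Icc (0:ℝ) 1, ∀ s ∈ Icc (0:ℝ) 1, s' ≤ s →
      ‖U ε s s'‖ ≤ 1)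
    (hUode : ∀ ε > (0:ℝ), ∀ s' ∈ Icc (0:ℝ) 1, ∀ s ∈ Icc (0:ℝ) 1, s' ≤ s →
      HasDerivAt (fun u => U ε u s') (ε⁻¹ • (L s).comp (U ε s s')) s) :
    ∃ C : ℝ, ∀ ε ∈ Ioc (0:ℝ) 1, ∀ x₀ : B, ∀ s ∈ Icc (0:ℝ) 1,
      ‖P s (U ε s 0 x₀) - T s 0 (P 0 x₀)‖ ≤ C * ε * ‖x₀‖ := by
  have h01 : (0:ℝ) ∈ Icc (0:ℝ) 1 := ⟨le_refl 0, zero_le_one⟩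
  have hUD : UniqueDiffOn ℝ (Icc (0:ℝ) 1) := uniqueDiffOn_Icc one_pos
  set ρ : (B →L[ℂ] B) →L[ℝ] (B →L[ℝ] B) :=
    ContinuousLinearMap.restrictScalarsL ℂ B B ℝ ℝ with hρdef
  set p : ℝ → B →L[ℝ] B := fun u => ρ (P u) with hpdef
  set q : ℝ → B →L[ℝ] B := fun u => ρ (P' u) with hqdef
  set a : ℝ → B →L[ℝ] B := fun u => ρ (A u) with hadef
  -- smoothness of the transported families
  have hpS : ContDiffOn ℝ 2 p (Icc (0:ℝ) 1) := ρ.contDiff.comp_contDiffOn hPsmooth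
  have haS : ContDiffOn ℝ 2 a (Icc (0:ℝ) 1) := ρ.contDiff.comp_contDiffOn hAsmooth
  have hqw : ∀ u ∈ Icc (0:ℝ) 1, HasDerivWithinAt p (q u) (Icc (0:ℝ) 1) u := fun u hu =>
    (ρ.hasFDerivAt.comp_hasDerivAt u (hP' u hu)).hasDerivWithinAt
  have hqd : ∀ u ∈ Icc (0:ℝ) 1, derivWithin p (Icc (0:ℝ) 1) u = q u := fun u hu =>
    (hqw u hu).derivWithin (hUD u hu)
  have hqS : ContDiffOn ℝ 1 q (Icc (0:ℝ) 1) :=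
    (hpS.derivWithin hUD (by norm_num)).congr fun u hu => (hqd u hu).symm
  set K : ℝ → B →L[ℝ] B := fun u => (q u).comp (p u) - (p u).comp (q u) with hKdef
  set G : ℝ → B →L[ℝ] B := fun u => (p u).comp ((q u).comp (a u)) with hGdef
  have hGS : ContDiffOn ℝ 1 G (Icc (0:ℝ) 1) :=
    (hpS.of_le (by norm_num)).clm_comp (hqS.clm_comp (haS.of_le (by norm_num)))
  set DG : ℝ → B →L[ℝ] B := derivWithin G (Icc (0:ℝ) 1) with hDGdef
  have hGd : ∀ u ∈ Icc (0:ℝ) 1, HasDerivWithinAt G (DG u) (Icc (0:ℝ) 1) u := fun u hu =>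
    ((hGS.differentiableOn one_ne_zero) u hu).hasDerivWithinAt
  have hKc : ContinuousOn K (Icc (0:ℝ) 1) :=
    (hqS.continuousOn.clm_comp hpS.continuousOn).sub
      (hpS.continuousOn.clm_comp hqS.continuousOn)
  have hDGc : ContinuousOn DG (Icc (0:ℝ) 1) := hGS.continuousOn_derivWithin hUD le_rfl
  obtain ⟨κ, hκ⟩ := isCompact_Icc.exists_bound_of_continuousOn hKc
  obtain ⟨γ, hγ⟩ := isCompact_Icc.exists_bound_of_continuousOn hGS.continuousOn
  obtain ⟨μ, hμ⟩ := isCompact_Icc.exists_bound_of_continuousOn hDGc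
  have hκ0 : 0 ≤ κ := le_trans (norm_nonneg _) (hκ 0 h01)
  have hγ0 : 0 ≤ γ := le_trans (norm_nonneg _) (hγ 0 h01)
  have hμ0 : 0 ≤ μ := le_trans (norm_nonneg _) (hμ 0 h01)
  -- pointwise algebraic identities
  have hp2 : ∀ u ∈ Icc (0:ℝ) 1, ∀ z : B, p u (p u z) = p u z := by
    intro u hu z
    have := congrArg (fun (S : B →L[ℂ] B) => S z) (hproj u hu)
    exact this
  have hpL : ∀ u ∈ Icc (0:ℝ) 1, ∀ z : B, p u (L u z) = 0 := by
    intro u hu z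
    have hv : L u z ∈ LinearMap.range (((1 - P u : B →L[ℂ] B) : B →ₗ[ℂ] B)) := by
      rw [hranQ u hu]; exact ⟨z, rfl⟩
    obtain ⟨w, hw⟩ := hv
    have hw' : w - P u w = L u z := hw
    have h2 : P u (P u w) = P u w := congrArg (fun (S : B →L[ℂ] B) => S w) (hproj u hu)
    show P u (L u z) = 0
    rw [← hw', map_sub, h2, sub_self]
  have hal : ∀ u ∈ Icc (0:ℝ) 1, ∀ z : B, a u (L u z) = z - p u z := by
    intro u hu z
    have := congrArg (fun (S : B →L[ℂ] B) => S z) (hAL u hu)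
    exact this
  have hρcomp : ∀ S T₁ : B →L[ℂ] B, ρ (S.comp T₁) = (ρ S).comp (ρ T₁) := fun S T₁ => rfl
  have hprod : ∀ u ∈ Icc (0:ℝ) 1, q u = (q u).comp (p u) + (p u).comp (q u) := by
    intro u hu
    have h1 : HasDerivWithinAt p ((q u).comp (p u) + (p u).comp (q u)) (Icc (0:ℝ) 1) u := by
      refine ((hqw u hu).clm_comp (hqw u hu)).congr (fun z hz => ?_) ?_
      · rw [← hρcomp]; exact (congrArg ρ (hproj z hz)).symm
      · rw [← hρcomp]; exact (congrArg ρ (hproj u hu)).symm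
    exact (hqd u hu).symm.trans (h1.derivWithin (hUD u hu))
  have hqprod : ∀ u ∈ Icc (0:ℝ) 1, ∀ z : B, q u z = q u (p u z) + p u (q u z) := by
    intro u hu z
    have := congrArg (fun (S : B →L[ℝ] B) => S z) (hprod u hu)
    exact this
  have hpqp : ∀ u ∈ Icc (0:ℝ) 1, ∀ z : B, p u (q u (p u z)) = 0 := by
    intro u hu z
    have h := hqprod u hu (p u z)
    rw [hp2 u hu z] at h
    exact (left_eq_add.mp h)
  -- the constant
  refine ⟨(γ + (κ * γ + μ)) * Real.exp κ + γ, ?_⟩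
  intro ε hε x₀ s hs
  have hε0 : 0 < ε := hε.1
  set x : ℝ → B := fun u => U ε u 0 x₀ with hxdef
  have hxnorm : ∀ u ∈ Icc (0:ℝ) 1, ‖x u‖ ≤ ‖x₀‖ := by
    intro u hu
    calc ‖x u‖ ≤ ‖U ε u 0‖ * ‖x₀‖ := (U ε u 0).le_opNorm x₀
    _ ≤ 1 * ‖x₀‖ :=
      mul_le_mul_of_nonneg_right (hUnorm ε hε0 0 h01 u hu hu.1) (norm_nonneg _)
    _ = ‖x₀‖ := one_mul _
  have hxd : ∀ u ∈ Icc (0:ℝ) 1, HasDerivWithinAt x (ε⁻¹ • L u (x u)) (Icc (0:ℝ) 1) u := by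
    intro u hu
    have h0 := hUode ε hε0 0 h01 u hu hu.1
    have h1 := (((ContinuousLinearMap.apply ℂ B x₀).restrictScalars
      ℝ).hasFDerivAt.comp_hasDerivAt u h0).hasDerivWithinAt (s := Icc (0:ℝ) 1)
    have h2 : ((ContinuousLinearMap.apply ℂ B x₀).restrictScalars ℝ)
        (ε⁻¹ • (L u).comp (U ε u 0)) = ε⁻¹ • L u (x u) := by
      rw [map_smul]; rfl
    rw [h2] at h1
    exact h1
  set y : ℝ → B := fun u => T u 0 (P 0 x₀) with hydef
  have hyd : ∀ u ∈ Icc (0:ℝ) 1, HasDerivWithinAt y (K u (y u)) (Icc (0:ℝ) 1) u := by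
    intro u hu
    have h0 := hTode 0 h01 u hu
    exact (((ContinuousLinearMap.apply ℂ B (P 0 x₀)).restrictScalars
      ℝ).hasFDerivAt.comp_hasDerivAt u h0).hasDerivWithinAt (s := Icc (0:ℝ) 1)
  set v : ℝ → B := fun u => p u (x u) - y u - ε • G u (x u) with hvdef
  have hvd : ∀ u ∈ Icc (0:ℝ) 1, HasDerivWithinAt v
      (K u (v u) + ε • (K u (G u (x u)) - DG u (x u))) (Icc (0:ℝ) 1) u := by
    intro u hu
    have h1 : HasDerivWithinAt (fun r => p r (x r))
        (q u (x u) + p u (ε⁻¹ • L u (x u))) (Icc (0:ℝ) 1) u :=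
      (hqw u hu).clm_apply (hxd u hu)
    have h3 : HasDerivWithinAt (fun r => G r (x r))
        (DG u (x u) + G u (ε⁻¹ • L u (x u))) (Icc (0:ℝ) 1) u :=
      (hGd u hu).clm_apply (hxd u hu)
    have h4 := (h1.sub (hyd u hu)).sub (h3.const_smul ε)
    have e0 : p u (ε⁻¹ • L u (x u)) = 0 := by
      rw [map_smul, hpL u hu (x u), smul_zero]
    have e1 : ε • G u (ε⁻¹ • L u (x u)) = p u (q u (x u)) := by
      rw [map_smul, smul_smul, mul_inv_cancel₀ (ne_of_gt hε0), one_smul]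
      show p u (q u (a u (L u (x u)))) = _
      rw [hal u hu (x u), map_sub, map_sub, hpqp u hu (x u), sub_zero]
    have e2 : K u (v u) = K u (p u (x u)) - K u (y u) - ε • K u (G u (x u)) := by
      simp only [hvdef, map_sub, map_smul]
    have e3 : K u (p u (x u)) = q u (p u (x u)) := by
      show q u (p u (p u (x u))) - p u (q u (p u (x u))) = _
      rw [hp2 u hu, hpqp u hu, sub_zero]
    have heq : K u (v u) + ε • (K u (G u (x u)) - DG u (x u))
        = q u (x u) + p u (ε⁻¹ • L u (x u)) - K u (y u)
        - ε • (DG u (x u) + G u (ε⁻¹ • L u (x u))) := by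
      rw [e2, e3, e0, smul_add, e1, add_zero, hqprod u hu (x u), smul_sub,
        map_add, hpqp u hu (x u), hp2 u hu ((q u) (x u))]
      abel
    rw [heq]
    exact h4
  have hvc : ContinuousOn v (Icc (0:ℝ) 1) := fun u hu => (hvd u hu).continuousWithinAt
  have hsub : Icc (0:ℝ) s ⊆ Icc (0:ℝ) 1 := Icc_subset_Icc le_rfl hs.2
  have hv0 : ‖v 0‖ ≤ ε * (γ * ‖x₀‖) := by
    have hx0 : x 0 = x₀ := by
      show U ε 0 0 x₀ = x₀
      rw [hUinit ε hε0 0 h01]; rfl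
    have hy0 : y 0 = P 0 x₀ := by
      show T 0 0 (P 0 x₀) = P 0 x₀
      rw [hTinit 0 h01]; rfl
    have : v 0 = -(ε • G 0 x₀) := by
      simp only [hvdef, hx0, hy0]
      show P 0 x₀ - P 0 x₀ - ε • G 0 x₀ = _
      abel
    rw [this, norm_neg, norm_smul, Real.norm_of_nonneg hε0.le]
    refine mul_le_mul_of_nonneg_left ?_ hε0.le
    calc ‖G 0 x₀‖ ≤ ‖G 0‖ * ‖x₀‖ := (G 0).le_opNorm x₀
    _ ≤ γ * ‖x₀‖ := mul_le_mul_of_nonneg_right (hγ 0 h01) (norm_nonneg _)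
  have hb : ∀ u ∈ Ico (0:ℝ) s, ‖K u (v u) + ε • (K u (G u (x u)) - DG u (x u))‖
      ≤ κ * ‖v u‖ + ε * ((κ * γ + μ) * ‖x₀‖) := by
    intro u hu'
    have hu : u ∈ Icc (0:ℝ) 1 := hsub (Ico_subset_Icc_self hu')
    have h1 : ‖K u (v u)‖ ≤ κ * ‖v u‖ :=
      le_trans ((K u).le_opNorm _) (mul_le_mul_of_nonneg_right (hκ u hu) (norm_nonneg _))
    have h2 : ‖K u (G u (x u)) - DG u (x u)‖ ≤ (κ * γ + μ) * ‖x₀‖ := by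
      have ha1 : ‖K u (G u (x u))‖ ≤ κ * γ * ‖x₀‖ := by
        calc ‖K u (G u (x u))‖ ≤ ‖K u‖ * ‖G u (x u)‖ := (K u).le_opNorm _
        _ ≤ ‖K u‖ * (‖G u‖ * ‖x u‖) :=
          mul_le_mul_of_nonneg_left ((G u).le_opNorm _) (norm_nonneg _)
        _ ≤ κ * (γ * ‖x₀‖) := by
          have hxu := hxnorm u hu
          have h3 : ‖G u‖ * ‖x u‖ ≤ γ * ‖x₀‖ :=
            mul_le_mul (hγ u hu) hxu (norm_nonneg _) hγ0
          exact mul_le_mul (hκ u hu) h3 (by positivity) hκ0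
        _ = κ * γ * ‖x₀‖ := by ring
      have ha2 : ‖DG u (x u)‖ ≤ μ * ‖x₀‖ := by
        calc ‖DG u (x u)‖ ≤ ‖DG u‖ * ‖x u‖ := (DG u).le_opNorm _
        _ ≤ μ * ‖x₀‖ := mul_le_mul (hμ u hu) (hxnorm u hu) (norm_nonneg _) hμ0
      calc ‖K u (G u (x u)) - DG u (x u)‖ ≤ ‖K u (G u (x u))‖ + ‖DG u (x u)‖ :=
        norm_sub_le _ _
      _ ≤ κ * γ * ‖x₀‖ + μ * ‖x₀‖ := add_le_add ha1 ha2
      _ = (κ * γ + μ) * ‖x₀‖ := by ring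
    calc ‖K u (v u) + ε • (K u (G u (x u)) - DG u (x u))‖ ≤ ‖K u (v u)‖ + ‖ε • (K u (G u (x u)) - DG u (x u))‖ := norm_add_le _ _
    _ = ‖K u (v u)‖ + ε * ‖K u (G u (x u)) - DG u (x u)‖ := by
      rw [norm_smul, Real.norm_of_nonneg hε0.le]
    _ ≤ κ * ‖v u‖ + ε * ((κ * γ + μ) * ‖x₀‖) :=
      add_le_add h1 (mul_le_mul_of_nonneg_left h2 hε0.le)
  have hgron := norm_le_gronwallBound_of_norm_deriv_right_le
    (hvc.mono hsub)
    (fun u hu' => (hvd u (hsub (Ico_subset_Icc_self hu'))).mono_of_mem_nhdsWithin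
      (Icc_mem_nhdsGE_of_mem ⟨hu'.1, lt_of_lt_of_le hu'.2 hs.2⟩))
    hv0 hb s ⟨hs.1, le_rfl⟩
  rw [sub_zero] at hgron
  have hgb : gronwallBound (ε * (γ * ‖x₀‖)) κ (ε * ((κ * γ + μ) * ‖x₀‖)) s ≤
      (γ + (κ * γ + μ)) * Real.exp κ * (ε * ‖x₀‖) := by
    have h1 := gronwallBound_le_mul_exp (δ := ε * (γ * ‖x₀‖))
      (K := κ) (ε := ε * ((κ * γ + μ) * ‖x₀‖)) (t := s) hκ0 (by positivity)
    refine h1.trans ?_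
    have he : Real.exp (κ * s) ≤ Real.exp κ := by
      exact Real.exp_le_exp.mpr (mul_le_of_le_one_right hκ0 hs.2)
    have hd : ε * (γ * ‖x₀‖) + ε * ((κ * γ + μ) * ‖x₀‖) * s ≤
        (γ + (κ * γ + μ)) * (ε * ‖x₀‖) := by
      have h0 : 0 ≤ ε * ((κ * γ + μ) * ‖x₀‖) := by positivity
      have h1 : ε * ((κ * γ + μ) * ‖x₀‖) * s ≤ ε * ((κ * γ + μ) * ‖x₀‖) :=
        (mul_le_mul_of_nonneg_left hs.2 h0).trans_eq (mul_one _)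
      have h2 : (γ + (κ * γ + μ)) * (ε * ‖x₀‖)
          = ε * (γ * ‖x₀‖) + ε * ((κ * γ + μ) * ‖x₀‖) := by ring
      rw [h2]
      linarith
    calc (ε * (γ * ‖x₀‖) + ε * ((κ * γ + μ) * ‖x₀‖) * s) * Real.exp (κ * s) ≤
        ((γ + (κ * γ + μ)) * (ε * ‖x₀‖)) * Real.exp κ := by
          refine mul_le_mul hd he (Real.exp_pos _).le ?_
          positivity
    _ = (γ + (κ * γ + μ)) * Real.exp κ * (ε * ‖x₀‖) := by ring
  have hvs : P s (U ε s 0 x₀) - T s 0 (P 0 x₀) = v s + ε • G s (x s) := by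
    show p s (x s) - y s = v s + ε • G s (x s)
    simp only [hvdef]
    abel
  calc ‖P s (U ε s 0 x₀) - T s 0 (P 0 x₀)‖ = ‖v s + ε • G s (x s)‖ := by rw [hvs]
  _ ≤ ‖v s‖ + ‖ε • G s (x s)‖ := norm_add_le _ _
  _ ≤ (γ + (κ * γ + μ)) * Real.exp κ * (ε * ‖x₀‖) + ε * (γ * ‖x₀‖) := by
      refine add_le_add (hgron.trans hgb) ?_
      rw [norm_smul, Real.norm_of_nonneg hε0.le]
      refine mul_le_mul_of_nonneg_left ?_ hε0.le
      exact le_trans ((G s).le_opNorm _)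
        (mul_le_mul (hγ s hs) (hxnorm s hs) (norm_nonneg _) hγ0)
  _ = ((γ + (κ * γ + μ)) * Real.exp κ + γ) * ε * ‖x₀‖ := by ring
end

section
/- Adiabatic invariants (integral identity). Let B be a complex Banach space with dual B*, let L(s), 0 ≤ s ≤ 1, be a norm-continuous family of bounded operators on B with adjoints L(s)* on B*, and fix ε > 0. Suppose φ : [0,1] → B* is C¹ with L(s)*φ(s) = 0 for all s, and suppose ψ : [0,1] → B* is continuous with L(s)*ψ(s) = φ̇(s) for all s. Then every C¹ solution x : [0,1] → B of ε ẋ(s) = L(s)x(s) satisfies ⟨φ(s), x(s)⟩ − ⟨φ(0), x(0)⟩ = ε ∫₀ˢ ⟨ψ(s'), ẋ(s')⟩ ds' for all s ∈ [0,1]. -/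
open Set MeasureTheory

/-- **Adiabatic invariants, integral identity.**  Let `L s` be a
norm-continuous family of bounded operators on a complex Banach space `B` and `ε > 0`.
If `φ : [0,1] → B*` is `C¹` with `L(s)* φ(s) = 0` and `ψ : [0,1] → B*` is continuous with
`L(s)* ψ(s) = φ̇(s)`, then every `C¹` solution of `ε ẋ = L(s) x` satisfies
`⟨φ(s), x(s)⟩ − ⟨φ(0), x(0)⟩ = ε ∫₀ˢ ⟨ψ(s'), ẋ(s')⟩ ds'` for all `s ∈ [0,1]`.
(Here the adjoint acts by `L* φ = φ ∘ L`.) -/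
theorem adiabatic_invariant_integral_identity
    {B : Type*} [NormedAddCommGroup B] [NormedSpace ℂ B] [CompleteSpace B]
    (L : ℝ → B →L[ℂ] B) (hLcont : ContinuousOn L (Icc (0:ℝ) 1))
    (ε : ℝ) (hε : 0 < ε)
    (φ φ' ψ : ℝ → B →L[ℂ] ℂ)
    -- `φ` is `C¹` with derivative `φ'`
    (hφ' : ∀ s ∈ Icc (0:ℝ) 1, HasDerivAt φ (φ' s) s)
    (hφ'cont : ContinuousOn φ' (Icc (0:ℝ) 1))
    -- `φ(s) ∈ ker L(s)*`
    (hφker : ∀ s ∈ Icc (0:ℝ) 1, (φ s).comp (L s) = 0)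
    -- `ψ` is continuous with `L(s)* ψ(s) = φ̇(s)`
    (hψcont : ContinuousOn ψ (Icc (0:ℝ) 1))
    (hψ : ∀ s ∈ Icc (0:ℝ) 1, (ψ s).comp (L s) = φ' s)
    -- `x` is a `C¹` solution of `ε ẋ = L(s) x`
    (x x' : ℝ → B)
    (hx' : ∀ s ∈ Icc (0:ℝ) 1, HasDerivAt x (x' s) s)
    (hx'cont : ContinuousOn x' (Icc (0:ℝ) 1))
    (hode : ∀ s ∈ Icc (0:ℝ) 1, ε • x' s = L s (x s)) :
    ∀ s ∈ Icc (0:ℝ) 1,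
      φ s (x s) - φ 0 (x 0) = ε • ∫ t in (0:ℝ)..s, ψ t (x' t) := by
  intro s hs
  have key : ∀ t ∈ Icc (0:ℝ) 1,
      HasDerivAt (fun u => φ u (x u)) (ε • ψ t (x' t)) t := by
    intro t ht
    have hφR : HasDerivAt (fun u => ((ContinuousLinearMap.restrictScalarsL ℂ B ℂ ℝ ℝ) (φ u)))
        ((ContinuousLinearMap.restrictScalarsL ℂ B ℂ ℝ ℝ) (φ' t)) t :=
      ((ContinuousLinearMap.restrictScalarsL ℂ B ℂ ℝ ℝ).hasFDerivAt).comp_hasDerivAt t (hφ' t ht)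
    have h := hφR.clm_apply (hx' t ht)
    have h1 : φ t (x' t) = 0 := by
      have : ε • φ t (x' t) = 0 := by
        have := hφker t ht
        calc ε • φ t (x' t) = φ t (ε • x' t) := ((φ t).map_smul_of_tower ε (x' t)).symm
        _ = (φ t).comp (L t) (x t) := by rw [hode t ht]; rfl
        _ = 0 := by rw [this]; rfl
      have hε' : (ε:ℝ) ≠ 0 := ne_of_gt hε
      simpa [smul_eq_zero, hε'] using this
    have h2 : φ' t (x t) = ε • ψ t (x' t) := by
      rw [← hψ t ht]
      show ψ t (L t (x t)) = ε • ψ t (x' t)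
      rw [← hode t ht, (ψ t).map_smul_of_tower]
    simpa [ContinuousLinearMap.restrictScalarsL, h1, h2] using h
  have hsub : uIcc (0:ℝ) s ⊆ Icc 0 1 := by
    rw [uIcc_of_le hs.1]
    exact Icc_subset_Icc le_rfl hs.2
  have hint : IntervalIntegrable (fun t => ψ t (x' t)) volume 0 s := by
    apply ContinuousOn.intervalIntegrable
    exact (hψcont.clm_apply hx'cont).mono hsub
  have := intervalIntegral.integral_eq_sub_of_hasDerivAt
    (fun t ht => key t (hsub ht)) (hint.smul ε)
  rw [intervalIntegral.integral_smul] at this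
  rw [← this]
end

section
/- Complementarity in the gapped case. Let B be a complex Banach space and L a closed, densely defined operator on B satisfying the Hille–Yosida conditions for generators of contraction semigroups: every γ > 0 lies in the resolvent set of L and ‖(L − γ)x‖ ≥ γ‖x‖ for all x in the domain. Assume in addition that L is semi-Fredholm: ran L is closed and at least one of dim ker L and dim(B / ran L) is finite. Then ker L and ran L are complementary closed subspaces, B = ker L ⊕ ran L, and L is Fredholm of index zero: dim ker L = dim(B / ran L) < ∞. -/
/-- **Complementarity in the gapped case.**  Let `L` be a closed, densely
defined operator on a complex Banach space `B` satisfying the Hille–Yosida conditions for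
generators of contraction semigroups (every `γ > 0` is in the resolvent set and
`‖(L − γ)x‖ ≥ γ‖x‖`), and assume `L` is semi-Fredholm (`ran L` closed and `ker L` or
`B ⧸ ran L` finite dimensional).  Then `ker L` and `ran L` are complementary closed
subspaces, `B = ker L ⊕ ran L`, and `L` is Fredholm of index zero:
`dim ker L = dim (B ⧸ ran L) < ∞`. -/
theorem gapped_complementarity
    {B : Type*} [NormedAddCommGroup B] [NormedSpace ℂ B] [CompleteSpace B]
    (D : Subspace ℂ B) (L : D →ₗ[ℂ] B)
    -- `L` is densely defined and closed
    (hdense : Dense (D : Set B))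
    (hclosed : IsClosed {p : B × B | ∃ x : D, (x : B) = p.1 ∧ L x = p.2})
    -- Hille–Yosida conditions: dissipativity and `(0,∞)` in the resolvent set
    (hdiss : ∀ γ : ℝ, 0 < γ → ∀ x : D, γ * ‖(x : B)‖ ≤ ‖L x - γ • (x : B)‖)
    (hsurj : ∀ γ : ℝ, 0 < γ → ∀ y : B, ∃ x : D, L x - γ • (x : B) = y)
    -- `L` is semi-Fredholm
    (hranClosed : IsClosed ((LinearMap.range L : Submodule ℂ B) : Set B))
    (hsemiFred : FiniteDimensional ℂ (LinearMap.ker L) ∨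
      FiniteDimensional ℂ (B ⧸ LinearMap.range L)) :
    IsClosed (((LinearMap.ker L).map D.subtype : Submodule ℂ B) : Set B) ∧
    IsCompl ((LinearMap.ker L).map D.subtype) (LinearMap.range L) ∧
    FiniteDimensional ℂ (LinearMap.ker L) ∧
    FiniteDimensional ℂ (B ⧸ LinearMap.range L) ∧
    Module.finrank ℂ (LinearMap.ker L) = Module.finrank ℂ (B ⧸ LinearMap.range L) := by
  classical
  set K : Submodule ℂ B := (LinearMap.ker L).map D.subtype with hKdef
  set Ra : Submodule ℂ B := LinearMap.range L with hRdef
  -- Step A: K is closed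
  have hKset : (K : Set B) =
      (fun x : B => (x, (0 : B))) ⁻¹' {p : B × B | ∃ x : D, (x : B) = p.1 ∧ L x = p.2} := by
    ext x
    simp only [hKdef, Submodule.mem_map, LinearMap.mem_ker, Submodule.coe_subtype,
      Set.mem_preimage, Set.mem_setOf_eq, SetLike.mem_coe, Submodule.subtype_apply]
    exact ⟨fun ⟨d, h1, h2⟩ => ⟨d, h2, h1⟩, fun ⟨d, h1, h2⟩ => ⟨d, h2, h1⟩⟩
  have hKclosed : IsClosed (K : Set B) := by
    rw [hKset]; exact hclosed.preimage (by fun_prop)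
  -- Step B: disjointness
  have hdisj : ∀ x : B, x ∈ K → x ∈ Ra → x = 0 := by
    rintro x hxK ⟨u, rfl⟩
    obtain ⟨d, hd0', hdx'⟩ := hxK
    have hd0 : L d = 0 := hd0'
    have hdx : (d : B) = L u := hdx'
    have key : ∀ γ : ℝ, 0 < γ → ‖L u‖ ≤ 2 * γ * ‖(u : B)‖ := by
      intro γ hγ
      have hγ' : (γ : ℂ) ≠ 0 := by exact_mod_cast hγ.ne'
      set z : D := u + (γ : ℂ)⁻¹ • d with hz
      have hLz : L z = L u := by
        simp [hz, hd0]
      have hzc : (z : B) = (u : B) + (γ : ℂ)⁻¹ • (L u) := by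
        simp [hz, hdx]
      have hsub : L z - γ • (z : B) = -(γ • (u : B)) := by
        rw [hLz, hzc]
        rw [smul_add, ← Complex.coe_smul γ ((γ:ℂ)⁻¹ • L u), smul_smul,
          mul_inv_cancel₀ hγ', one_smul]
        abel
      have h1 := hdiss γ hγ z
      rw [hsub, norm_neg, norm_smul, Real.norm_eq_abs, abs_of_pos hγ] at h1
      have h2 : ‖(z : B)‖ ≤ ‖(u : B)‖ := le_of_mul_le_mul_left h1 hγ
      have h3 : ‖L u‖ = ‖γ • (z : B) - γ • (u : B)‖ := by
        rw [hzc, smul_add, ← Complex.coe_smul γ ((γ:ℂ)⁻¹ • L u), smul_smul,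
          mul_inv_cancel₀ hγ', one_smul]
        congr 1; abel
      calc ‖L u‖ = ‖γ • (z : B) - γ • (u : B)‖ := h3
        _ ≤ ‖γ • (z : B)‖ + ‖γ • (u : B)‖ := norm_sub_le _ _
        _ = γ * ‖(z : B)‖ + γ * ‖(u : B)‖ := by
            rw [norm_smul, norm_smul, Real.norm_eq_abs, abs_of_pos hγ]
        _ ≤ γ * ‖(u : B)‖ + γ * ‖(u : B)‖ := by nlinarith
        _ = 2 * γ * ‖(u : B)‖ := by ring
    by_contra hne
    have hpos : 0 < ‖L u‖ := norm_pos_iff.mpr hne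
    have hupos : 0 < ‖(u : B)‖ + 1 := by positivity
    have h5 := key (‖L u‖ / (4 * (‖(u : B)‖ + 1))) (by positivity)
    have e : 2 * (‖L u‖ / (4 * (‖(u : B)‖ + 1))) * ‖(u : B)‖ =
        ‖L u‖ * (‖(u : B)‖ / (2 * (‖(u : B)‖ + 1))) := by
      field_simp
      ring
    have hlt : ‖(u : B)‖ / (2 * (‖(u : B)‖ + 1)) < 1 := by
      rw [div_lt_one (by positivity)]; linarith [norm_nonneg (u : B)]
    rw [e] at h5
    nlinarith
  -- Step C: open mapping estimate
  have hCex : ∃ C > (0:ℝ), ∀ u : D, ∃ v : D, L v = L u ∧ ‖(v : B)‖ ≤ C * ‖L u‖ := by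
    set G : Submodule ℂ (B × B) := LinearMap.range (D.subtype.prod L) with hGdef
    have hGset : (G : Set (B × B)) = {p : B × B | ∃ x : D, (x : B) = p.1 ∧ L x = p.2} := by
      ext p
      simp only [hGdef, SetLike.mem_coe, LinearMap.mem_range, LinearMap.prod_apply, Function.prod,
        Submodule.subtype_apply, Prod.ext_iff, Set.mem_setOf_eq]
    have hGclosed : IsClosed (G : Set (B × B)) := hGset ▸ hclosed
    haveI : CompleteSpace G := hGclosed.completeSpace_coe
    haveI : CompleteSpace Ra := hranClosed.completeSpace_coe
    have memR : ∀ g : G, (g : B × B).2 ∈ Ra := by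
      rintro ⟨g, x, rfl⟩
      exact ⟨x, rfl⟩
    let ψ : G →ₗ[ℂ] Ra :=
      { toFun := fun g => ⟨(g : B × B).2, memR g⟩
        map_add' := fun a b => rfl
        map_smul' := fun c a => rfl }
    have hψbound : ∀ g : G, ‖ψ g‖ ≤ 1 * ‖g‖ := by
      intro g
      rw [one_mul]
      exact (norm_snd_le (g : B × B))
    let φ : G →L[ℂ] Ra := ψ.mkContinuous 1 hψbound
    have hφsurj : Function.Surjective φ := by
      rintro ⟨y, x, rfl⟩
      exact ⟨⟨((x : B), L x), ⟨x, rfl⟩⟩, rfl⟩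
    obtain ⟨C, hC0, hC⟩ := ContinuousLinearMap.exists_preimage_norm_le φ hφsurj
    refine ⟨C, hC0, fun u => ?_⟩
    obtain ⟨g, hg1, hg2⟩ := hC ⟨L u, ⟨u, rfl⟩⟩
    obtain ⟨gv, v, hv⟩ := g
    refine ⟨v, ?_, ?_⟩
    · have : (gv : B × B).2 = L u := congrArg Subtype.val hg1
      rw [← this, ← hv]; rfl
    · have h1 : ‖(v : B)‖ ≤ ‖(⟨gv, v, hv⟩ : G)‖ := by
        calc ‖(v : B)‖ = ‖(gv : B × B).1‖ := by rw [← hv]; rfl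
          _ ≤ ‖gv‖ := norm_fst_le gv
      have h2 : ‖(⟨L u, ⟨u, rfl⟩⟩ : Ra)‖ = ‖L u‖ := rfl
      calc ‖(v : B)‖ ≤ ‖(⟨gv, v, hv⟩ : G)‖ := h1
        _ ≤ C * ‖L u‖ := by rw [← h2]; exact hg2
  obtain ⟨C, hC0, hC⟩ := hCex
  haveI hRc : IsClosed (Ra : Set B) := hranClosed
  -- Step D: every y lies in K ⊔ Ra
  have hsup : ∀ y : B, y ∈ K ⊔ Ra := by
    intro y
    have hexists : ∀ n : ℕ, ∃ x : D, L x - (1 / (n + 1) : ℝ) • (x : B) = y :=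
      fun n => hsurj _ (by positivity) y
    choose x hx using hexists
    choose v hv1 hv2 using fun n => hC (x n)
    set γ : ℕ → ℝ := fun n => 1 / (n + 1) with hγ
    have hγpos : ∀ n, 0 < γ n := fun n => by positivity
    have hγle : ∀ n, γ n ≤ 1 / (n + 1) := fun n => le_refl _
    have hxb : ∀ n, γ n * ‖(x n : B)‖ ≤ ‖y‖ := fun n => by
      have h := hdiss (γ n) (hγpos n) (x n)
      rw [hx n] at h
      exact h
    have hLxb : ∀ n, ‖L (x n)‖ ≤ 2 * ‖y‖ := fun n => by
      have heq : L (x n) = y + γ n • ((x n : B)) := by rw [← hx n]; abel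
      have hns : ‖γ n • ((x n : B))‖ = γ n * ‖(x n : B)‖ := by
        rw [norm_smul, Real.norm_eq_abs, abs_of_pos (hγpos n)]
      calc ‖L (x n)‖ = ‖y + γ n • ((x n : B))‖ := by rw [← heq]
        _ ≤ ‖y‖ + ‖γ n • ((x n : B))‖ := norm_add_le _ _
        _ ≤ ‖y‖ + ‖y‖ := by rw [hns]; linarith [hxb n]
        _ = 2 * ‖y‖ := by ring
    have hvb : ∀ n, ‖(v n : B)‖ ≤ C * (2 * ‖y‖) :=
      fun n => (hv2 n).trans (mul_le_mul_of_nonneg_left (hLxb n) hC0.le)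
    set k : ℕ → D := fun n => x n - v n with hk
    have hkker : ∀ n, L (k n) = 0 := fun n => by simp [hk, hv1 n]
    set c : ℕ → B := fun n => γ n • ((k n : B)) with hc
    have hcK : ∀ n, c n ∈ K := fun n => by
      have h1 : ((k n : B)) ∈ K := ⟨k n, LinearMap.mem_ker.mpr (hkker n), rfl⟩
      have h2 := K.smul_mem ((γ n : ℂ)) h1
      rwa [Complex.coe_smul] at h2
    have hiden : ∀ n, y + c n + γ n • ((v n : B)) = L (v n) := fun n => by
      have hco : ((x n : B)) = ((k n : B)) + ((v n : B)) := by
        simp only [hk, Submodule.coe_sub]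
        abel
      show y + γ n • ((k n : B)) + γ n • ((v n : B)) = L (v n)
      rw [hv1 n, ← hx n, hco, smul_add]
      abel
    -- pass to the quotient
    set KQ : Submodule ℂ (B ⧸ Ra) := K.map Ra.mkQ with hKQ
    haveI hKQfin : FiniteDimensional ℂ KQ := by
      rcases hsemiFred with h | h
      · haveI : FiniteDimensional ℂ (LinearMap.ker L) := h
        haveI : FiniteDimensional ℂ K := Module.Finite.map _ _
        exact Module.Finite.map _ _
      · haveI : FiniteDimensional ℂ (B ⧸ Ra) := h
        exact FiniteDimensional.finiteDimensional_submodule KQ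
    have hKQclosed : IsClosed (KQ : Set (B ⧸ Ra)) := Submodule.closed_of_finiteDimensional KQ
    have hmemKQ : ∀ n, -(Ra.mkQ (c n)) ∈ KQ := fun n =>
      KQ.neg_mem ⟨c n, hcK n, rfl⟩
    have hqb : ∀ n, ‖-(Ra.mkQ (c n)) - Ra.mkQ y‖ ≤ γ n * (C * (2 * ‖y‖)) := by
      intro n
      have h0 : Ra.mkQ (L (v n)) = 0 := by
        rw [Submodule.mkQ_apply, Submodule.Quotient.mk_eq_zero]
        exact ⟨v n, rfl⟩
      have h1 : -(Ra.mkQ (c n)) - Ra.mkQ y = Ra.mkQ (γ n • ((v n : B))) := by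
        have := congrArg Ra.mkQ (hiden n)
        rw [map_add, map_add, h0] at this
        rw [eq_neg_of_add_eq_zero_right this]
        abel
      rw [h1, Submodule.mkQ_apply]
      calc ‖(Submodule.Quotient.mk (γ n • ((v n : B))) : B ⧸ Ra)‖
          ≤ ‖γ n • ((v n : B))‖ := Submodule.Quotient.norm_mk_le _ _
        _ = γ n * ‖(v n : B)‖ := by
            rw [norm_smul, Real.norm_eq_abs, abs_of_pos (hγpos n)]
        _ ≤ γ n * (C * (2 * ‖y‖)) := mul_le_mul_of_nonneg_left (hvb n) (hγpos n).le
    have htend : Filter.Tendsto (fun n => -(Ra.mkQ (c n))) Filter.atTop (nhds (Ra.mkQ y)) := by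
      rw [tendsto_iff_norm_sub_tendsto_zero]
      have hlim : Filter.Tendsto (fun n : ℕ => γ n * (C * (2 * ‖y‖))) Filter.atTop (nhds 0) := by
        have h := (tendsto_one_div_add_atTop_nhds_zero_nat).mul_const (C * (2 * ‖y‖))
        simpa [hγ] using h
      exact squeeze_zero (fun n => norm_nonneg _) hqb hlim
    have hyKQ : Ra.mkQ y ∈ KQ := hKQclosed.mem_of_tendsto htend
      (Filter.Eventually.of_forall fun n => hmemKQ n)
    obtain ⟨z, hzK, hz⟩ := hyKQ
    have hyz : y - z ∈ Ra := by
      have : Ra.mkQ (y - z) = 0 := by rw [map_sub, hz, sub_self]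
      rwa [Submodule.mkQ_apply, Submodule.Quotient.mk_eq_zero] at this
    exact Submodule.mem_sup.mpr ⟨z, hzK, y - z, hyz, by abel⟩
  -- assemble
  have hcompl : IsCompl K Ra := by
    constructor
    · rw [disjoint_iff_inf_le]
      rintro x ⟨hx1, hx2⟩
      exact hdisj x hx1 hx2
    · rw [codisjoint_iff]
      exact Submodule.eq_top_iff'.mpr hsup
  have e1 : (B ⧸ Ra) ≃ₗ[ℂ] K := Submodule.quotientEquivOfIsCompl Ra K hcompl.symm
  have e2 : (LinearMap.ker L) ≃ₗ[ℂ] K :=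
    Submodule.equivMapOfInjective D.subtype D.injective_subtype (LinearMap.ker L)
  have hKfin : FiniteDimensional ℂ K := by
    rcases hsemiFred with h | h
    · haveI : FiniteDimensional ℂ (LinearMap.ker L) := h
      exact Module.Finite.equiv e2
    · haveI : FiniteDimensional ℂ (B ⧸ Ra) := h
      exact Module.Finite.equiv e1
  haveI := hKfin
  refine ⟨hKclosed, hcompl, Module.Finite.equiv e2.symm, Module.Finite.equiv e1.symm, ?_⟩
  rw [LinearEquiv.finrank_eq e2, LinearEquiv.finrank_eq e1]
end

section
/- Characterization of the closure of the range. Let B be a complex Banach space and L a closed, densely defined operator on B satisfying the Hille–Yosida conditions for generators of contraction semigroups: every γ > 0 lies in the resolvent set of L and ‖(L − γ)x‖ ≥ γ‖x‖ for all x in the domain (equivalently ‖γ(L − γ)⁻¹‖ ≤ 1 for all γ > 0). Then for every b ∈ B: b ∈ closure(ran L) if and only if γ(L − γ)⁻¹ b → 0 in norm as γ ↓ 0. -/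
open Filter Set

/-- **Characterization of the closure of the range.**  Let `L` be a closed,
densely defined operator on a complex Banach space `B` satisfying the Hille–Yosida
conditions, with bounded resolvents `R γ = (L − γ)⁻¹` for `γ > 0`.  Then for every `b ∈ B`,
`b ∈ closure (ran L)` if and only if `γ (L − γ)⁻¹ b → 0` in norm as `γ ↓ 0`. -/
theorem range_closure_characterization
    {B : Type*} [NormedAddCommGroup B] [NormedSpace ℂ B] [CompleteSpace B]
    (D : Subspace ℂ B) (L : D →ₗ[ℂ] B)
    -- `L` is densely defined and closed
    (hdense : Dense (D : Set B))
    (hclosed : IsClosed {p : B × B | ∃ x : D, (x : B) = p.1 ∧ L x = p.2})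
    -- Hille–Yosida dissipativity condition
    (hdiss : ∀ γ : ℝ, 0 < γ → ∀ x : D, γ * ‖(x : B)‖ ≤ ‖L x - γ • (x : B)‖)
    -- `R γ` is the bounded inverse of `L − γ` for every `γ > 0`
    (R : ℝ → B →L[ℂ] B)
    (hmem : ∀ γ : ℝ, 0 < γ → ∀ y : B, R γ y ∈ D)
    (hleft : ∀ γ : ℝ, 0 < γ → ∀ x : D, R γ (L x - γ • (x : B)) = (x : B))
    (hright : ∀ γ : ℝ, 0 < γ → ∀ y : B, ∀ h : R γ y ∈ D,
      L ⟨R γ y, h⟩ - γ • R γ y = y) :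
    ∀ b : B, b ∈ closure ((LinearMap.range L : Submodule ℂ B) : Set B) ↔
      Tendsto (fun γ : ℝ => γ • R γ b) (nhdsWithin 0 (Ioi 0)) (nhds 0) := by
  have hRbound : ∀ γ : ℝ, 0 < γ → ∀ y : B, γ * ‖R γ y‖ ≤ ‖y‖ := by
    intro γ hγ y
    have h := hdiss γ hγ ⟨R γ y, hmem γ hγ y⟩
    rwa [hright γ hγ y (hmem γ hγ y)] at h
  intro b
  constructor
  · intro hb
    rw [Metric.tendsto_nhdsWithin_nhds]
    intro ε hε
    obtain ⟨y, hy, hyb⟩ := Metric.mem_closure_iff.mp hb (ε/2) (by positivity)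
    obtain ⟨x, hx⟩ := hy
    refine ⟨ε / (4 * (‖(x : B)‖ + 1)), by positivity, ?_⟩
    intro γ hγ hγd
    simp only [mem_Ioi] at hγ
    rw [Real.dist_eq, sub_zero, abs_of_pos hγ] at hγd
    rw [dist_zero_right]
    have key : R γ (L x) = (x : B) + γ • R γ x := by
      have h1 := hleft γ hγ x
      have h2 : L x = (L x - γ • (x : B)) + γ • (x : B) := by abel
      rw [h2, map_add, h1, (R γ).map_smul_of_tower]
    have hb1 : γ • R γ b = γ • R γ (b - L x) + γ • (x : B) + γ • (γ • R γ x) := by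
      rw [map_sub, key, smul_sub, smul_add]
      abel
    have e1 : ‖γ • R γ (b - L x)‖ ≤ ‖b - L x‖ := by
      rw [norm_smul, Real.norm_eq_abs, abs_of_pos hγ]
      exact hRbound γ hγ _
    have eRx : ‖γ • R γ x‖ ≤ ‖(x : B)‖ := by
      rw [norm_smul, Real.norm_eq_abs, abs_of_pos hγ]
      exact hRbound γ hγ _
    have e2 : ‖γ • (γ • R γ x)‖ ≤ γ * ‖(x : B)‖ := by
      rw [norm_smul, Real.norm_eq_abs, abs_of_pos hγ]
      exact mul_le_mul_of_nonneg_left eRx hγ.le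
    have e3 : ‖b - L x‖ < ε / 2 := by
      rw [← dist_eq_norm, hx]; exact hyb
    have e4 : γ * ‖(x : B)‖ < ε / 4 := by
      have h5 : γ * (‖(x : B)‖ + 1) < ε / (4 * (‖(x : B)‖ + 1)) * (‖(x : B)‖ + 1) := by
        apply mul_lt_mul_of_pos_right hγd (by positivity)
      have h6 : ε / (4 * (‖(x : B)‖ + 1)) * (‖(x : B)‖ + 1) = ε / 4 := by
        field_simp
      nlinarith [norm_nonneg (x : B)]
    have e5 : ‖γ • (x : B)‖ < ε / 4 := by
      rw [norm_smul, Real.norm_eq_abs, abs_of_pos hγ]; exact e4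
    calc ‖γ • R γ b‖ = ‖γ • R γ (b - L x) + γ • (x : B) + γ • (γ • R γ x)‖ := by
            rw [hb1]
        _ ≤ ‖γ • R γ (b - L x)‖ + ‖γ • (x : B)‖ + ‖γ • (γ • R γ x)‖ := norm_add₃_le
        _ < ε := by
            have h7 := lt_of_le_of_lt e1 e3
            have h8 := lt_of_le_of_lt e2 e4
            linarith
  · intro hb
    rw [Metric.mem_closure_iff]
    intro ε hε
    obtain ⟨δ, hδ, hδ2⟩ := Metric.tendsto_nhdsWithin_nhds.mp hb ε hε
    set γ := δ / 2 with hγdef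
    have hγpos : 0 < γ := by positivity
    have hγmem : γ ∈ Ioi (0 : ℝ) := hγpos
    have hγd : dist γ 0 < δ := by
      rw [Real.dist_eq, sub_zero, abs_of_pos hγpos]
      linarith
    have hsmall := hδ2 hγmem hγd
    rw [dist_zero_right] at hsmall
    refine ⟨L ⟨R γ b, hmem γ hγpos b⟩, LinearMap.mem_range_self L _, ?_⟩
    rw [dist_eq_norm]
    have h1 : L ⟨R γ b, hmem γ hγpos b⟩ = b + γ • R γ b :=
      sub_eq_iff_eq_add.mp (hright γ hγpos b (hmem γ hγpos b))
    rw [h1]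
    have h2 : b - (b + γ • R γ b) = -(γ • R γ b) := by abel
    rw [h2, norm_neg]
    exact hsmall
end

section
/- Density of kernel plus range in the reflexive case. Let B be a reflexive complex Banach space and L a closed, densely defined operator on B satisfying the Hille–Yosida conditions for generators of contraction semigroups: every γ > 0 lies in the resolvent set of L and ‖(L − γ)x‖ ≥ γ‖x‖ for all x in the domain. Then ker L + ran L is dense in B: closure(ker L + ran L) = B. In particular, if ker L + closure(ran L) is closed, then B = ker L + closure(ran L). -/
open Filter Topology NormedSpace Set

/-- Separation of a point from a closed complex subspace. -/
lemma aux_sep_closed_submodule {E : Type*} [NormedAddCommGroup E] [NormedSpace ℂ E]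
    (M : Submodule ℂ E) (hM : IsClosed (M : Set E)) {z : E} (hz : z ∉ M) :
    ∃ f : E →L[ℂ] ℂ, (∀ a ∈ M, f a = 0) ∧ f z ≠ 0 := by
  have hconv : Convex ℝ (M : Set E) := (M.restrictScalars ℝ).convex
  obtain ⟨f, u, hfM, hfz⟩ :=
    RCLike.geometric_hahn_banach_closed_point (𝕜 := ℂ) hconv hM hz
  have hu : 0 < u := by simpa using hfM 0 M.zero_mem
  refine ⟨f, fun a ha => ?_, fun h => by simp [h] at hfz; linarith⟩
  by_contra hfa
  have hmem : (((u + 1 : ℝ) : ℂ) * (f a)⁻¹) • a ∈ M := M.smul_mem _ ha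
  have := hfM _ hmem
  rw [map_smul, smul_eq_mul, mul_assoc, inv_mul_cancel₀ hfa, mul_one] at this
  simp at this
  linarith

/-- **Density of kernel plus range in the reflexive case.**  Let `B` be a
reflexive complex Banach space and `L` a closed, densely defined operator on `B`
satisfying the Hille–Yosida conditions for generators of contraction semigroups.  Then
`ker L + ran L` is dense in `B`; in particular, if `ker L + closure (ran L)` is closed,
then `B = ker L + closure (ran L)`. -/
theorem kernel_plus_range_dense_reflexive
    {B : Type*} [NormedAddCommGroup B] [NormedSpace ℂ B] [CompleteSpace B]
    -- `B` is reflexive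
    (hrefl : Function.Surjective (NormedSpace.inclusionInDoubleDual ℂ B))
    (D : Subspace ℂ B) (L : D →ₗ[ℂ] B)
    -- `L` is densely defined and closed
    (hdense : Dense (D : Set B))
    (hclosed : IsClosed {p : B × B | ∃ x : D, (x : B) = p.1 ∧ L x = p.2})
    -- Hille–Yosida conditions: dissipativity and `(0,∞)` in the resolvent set
    (hdiss : ∀ γ : ℝ, 0 < γ → ∀ x : D, γ * ‖(x : B)‖ ≤ ‖L x - γ • (x : B)‖)
    (hsurj : ∀ γ : ℝ, 0 < γ → ∀ y : B, ∃ x : D, L x - γ • (x : B) = y) :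
    Dense ((((LinearMap.ker L).map D.subtype ⊔ LinearMap.range L : Submodule ℂ B)) : Set B) ∧
    (IsClosed ((((LinearMap.ker L).map D.subtype ⊔
          (LinearMap.range L).topologicalClosure : Submodule ℂ B)) : Set B) →
      (LinearMap.ker L).map D.subtype ⊔ (LinearMap.range L).topologicalClosure = ⊤) := by
  classical
  -- the graph of `L` as a submodule of `B × B`
  let G : Submodule ℂ (B × B) :=
    { carrier := {p : B × B | ∃ x : D, (x : B) = p.1 ∧ L x = p.2}
      add_mem' := by
        rintro p q ⟨a, ha1, ha2⟩ ⟨b, hb1, hb2⟩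
        exact ⟨a + b, by simp [ha1, hb1], by simp [ha2, hb2]⟩
      zero_mem' := ⟨0, by simp, by simp⟩
      smul_mem' := by
        rintro cc p ⟨a, ha1, ha2⟩
        exact ⟨cc • a, by simp [ha1], by simp [ha2]⟩ }
  have hGclosed : IsClosed (G : Set (B × B)) := hclosed
  -- Main step: every `x` decomposes as `y + (x - y)` with `y ∈ ker L`,
  -- `x - y ∈ closure (range L)`.
  have key : ∀ x : B, ∃ y : B, y ∈ (LinearMap.ker L).map D.subtype ∧
      x - y ∈ (LinearMap.range L).topologicalClosure := by
    intro x
    choose v hv using fun γ : ℝ => fun h : (0:ℝ) < γ => hsurj γ h x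
    set v' : ℝ → D := fun γ => if h : 0 < γ then v γ h else 0 with hv'def
    have hv' : ∀ γ : ℝ, 0 < γ → L (v' γ) - γ • ((v' γ : B)) = x := by
      intro γ hγ
      simp only [hv'def, dif_pos hγ]
      exact hv γ hγ
    set w : ℝ → D := fun γ => -(γ • v' γ) with hwdef
    have hwcoe : ∀ γ : ℝ, ((w γ : D) : B) = -(γ • ((v' γ : D) : B)) := by
      intro γ; simp [hwdef]
    have hdis : ∀ γ : ℝ, 0 < γ → γ * ‖((v' γ : D) : B)‖ ≤ ‖x‖ := by
      intro γ hγ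
      have := hdiss γ hγ (v' γ)
      rwa [hv' γ hγ] at this
    -- uniform bound on `w`
    have hnw : ∀ γ : ℝ, ‖((w γ : D) : B)‖ ≤ ‖x‖ := by
      intro γ
      by_cases hγ : 0 < γ
      · rw [hwcoe, norm_neg, norm_smul, Real.norm_of_nonneg hγ.le]
        exact hdis γ hγ
      · have : v' γ = 0 := by simp [hv'def, dif_neg hγ]
        rw [hwcoe, this]
        simp
    -- `x - w γ ∈ range L`
    have hwx : ∀ γ : ℝ, 0 < γ → x - ((w γ : D) : B) = L (v' γ) := by
      intro γ hγ
      have h := hv' γ hγ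
      rw [hwcoe, sub_neg_eq_add, ← h]
      abel
    -- `‖L (w γ)‖ ≤ 2γ‖x‖`
    have hLw : ∀ γ : ℝ, 0 < γ → ‖L (w γ)‖ ≤ 2 * γ * ‖x‖ := by
      intro γ hγ
      have h := hv' γ hγ
      have h1 := hdis γ hγ
      have hLv : L (v' γ) = x + γ • ((v' γ : D) : B) := by rw [← h]; abel
      have hLweq : L (w γ) = -(γ • L (v' γ)) := by
        simp [hwdef, LinearMap.map_smul_of_tower]
      have h2 : ‖γ • ((v' γ : D) : B)‖ ≤ ‖x‖ := by
        rw [norm_smul, Real.norm_of_nonneg hγ.le]; exact h1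
      have h3 : ‖L (v' γ)‖ ≤ 2 * ‖x‖ := by
        rw [hLv]
        calc ‖x + γ • ((v' γ : D) : B)‖ ≤ ‖x‖ + ‖γ • ((v' γ : D) : B)‖ := norm_add_le _ _
          _ ≤ ‖x‖ + ‖x‖ := add_le_add_right h2 _
          _ = 2 * ‖x‖ := by ring
      rw [hLweq, norm_neg, norm_smul, Real.norm_of_nonneg hγ.le]
      calc γ * ‖L (v' γ)‖ ≤ γ * (2 * ‖x‖) := mul_le_mul_of_nonneg_left h3 hγ.le
        _ = 2 * γ * ‖x‖ := by ring
    -- ultrafilter refining `𝓝[>] 0`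
    set U : Ultrafilter ℝ := Ultrafilter.of (𝓝[>] (0:ℝ)) with hUdef
    have hUle : (U : Filter ℝ) ≤ 𝓝[>] (0:ℝ) := Ultrafilter.of_le _
    have hUpos : ∀ᶠ γ in (U : Filter ℝ), 0 < γ := hUle self_mem_nhdsWithin
    have hU0 : Tendsto (fun γ : ℝ => γ) (U : Filter ℝ) (𝓝 0) :=
      tendsto_id.mono_left (hUle.trans nhdsWithin_le_nhds)
    have hg : Tendsto (fun γ : ℝ => 2 * γ * ‖x‖) (U : Filter ℝ) (𝓝 0) := by
      simpa using (hU0.const_mul (2:ℝ)).mul_const ‖x‖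
    have hLw0 : Tendsto (fun γ => L (w γ)) (U : Filter ℝ) (𝓝 0) := by
      refine squeeze_zero_norm' ?_ hg
      filter_upwards [hUpos] with γ hγ
      exact hLw γ hγ
    -- weak limit of `w` along `U`, via reflexivity
    have hex : ∀ ψ : StrongDual ℂ B, ∃ cψ : ℂ,
        Tendsto (fun γ => ψ ((w γ : D) : B)) (U : Filter ℝ) (𝓝 cψ) := by
      intro ψ
      have hmem : ∀ γ, ψ ((w γ : D) : B) ∈ Metric.closedBall (0:ℂ) (‖ψ‖ * ‖x‖) := by
        intro γ
        rw [Metric.mem_closedBall, dist_zero_right]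
        calc ‖ψ ((w γ : D) : B)‖ ≤ ‖ψ‖ * ‖((w γ : D) : B)‖ := ψ.le_opNorm _
          _ ≤ ‖ψ‖ * ‖x‖ := mul_le_mul_of_nonneg_left (hnw γ) (norm_nonneg ψ)
      obtain ⟨cψ, -, hc⟩ := (isCompact_closedBall (0:ℂ) (‖ψ‖ * ‖x‖)).ultrafilter_le_nhds
        (U.map (fun γ => ψ ((w γ : D) : B)))
        (by
          rw [Ultrafilter.coe_map]
          exact le_principal_iff.2 (Filter.mem_map.2 (Filter.univ_mem' fun γ => hmem γ)))
      exact ⟨cψ, hc⟩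
    choose c hc using hex
    have hadd : ∀ ψ φ : StrongDual ℂ B, c (ψ + φ) = c ψ + c φ := fun ψ φ =>
      tendsto_nhds_unique (hc (ψ + φ)) (((hc ψ).add (hc φ)).congr (fun γ => by simp))
    have hsmul : ∀ (a : ℂ) (ψ : StrongDual ℂ B), c (a • ψ) = a * c ψ := fun a ψ =>
      tendsto_nhds_unique (hc (a • ψ)) (((hc ψ).const_mul a).congr (fun γ => by simp))
    have hbound : ∀ ψ : StrongDual ℂ B, ‖c ψ‖ ≤ ‖x‖ * ‖ψ‖ := by
      intro ψ
      refine le_of_tendsto (hc ψ).norm (Filter.Eventually.of_forall fun γ => ?_)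
      calc ‖ψ ((w γ : D) : B)‖ ≤ ‖ψ‖ * ‖((w γ : D) : B)‖ := ψ.le_opNorm _
        _ ≤ ‖ψ‖ * ‖x‖ := mul_le_mul_of_nonneg_left (hnw γ) (norm_nonneg ψ)
        _ = ‖x‖ * ‖ψ‖ := mul_comm _ _
    let F : StrongDual ℂ (StrongDual ℂ B) :=
      LinearMap.mkContinuous
        { toFun := c
          map_add' := hadd
          map_smul' := hsmul } ‖x‖ hbound
    obtain ⟨y, hy⟩ := hrefl F
    have hwy : ∀ ψ : StrongDual ℂ B,
        Tendsto (fun γ => ψ ((w γ : D) : B)) (U : Filter ℝ) (𝓝 (ψ y)) := by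
      intro ψ
      have h1 : ψ y = c ψ := congrArg (fun T : StrongDual ℂ (StrongDual ℂ B) => T ψ) hy
      rw [h1]; exact hc ψ
    -- `y ∈ ker L` via the closed graph
    have hyG : ((y, (0:B)) : B × B) ∈ G := by
      by_contra hnot
      obtain ⟨f, hf0, hfne⟩ := aux_sep_closed_submodule G hGclosed hnot
      set ψ₁ : StrongDual ℂ B := f.comp (ContinuousLinearMap.inl ℂ B B) with hψ₁
      set ψ₂ : StrongDual ℂ B := f.comp (ContinuousLinearMap.inr ℂ B B) with hψ₂
      have hdecomp : ∀ p : B × B, f p = ψ₁ p.1 + ψ₂ p.2 := by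
        intro p
        have hp : p = (p.1, 0) + (0, p.2) := by simp
        conv_lhs => rw [hp, map_add]
        rfl
      have hzero : ∀ γ : ℝ, ψ₁ ((w γ : D) : B) + ψ₂ (L (w γ)) = 0 := by
        intro γ
        have hmem : (((w γ : D) : B), L (w γ)) ∈ G := ⟨w γ, rfl, rfl⟩
        have h := hf0 _ hmem
        rwa [hdecomp] at h
      have h1 : Tendsto (fun γ => ψ₁ ((w γ : D) : B) + ψ₂ (L (w γ)))
          (U : Filter ℝ) (𝓝 (ψ₁ y + ψ₂ 0)) :=
        (hwy ψ₁).add ((ψ₂.continuous.tendsto 0).comp hLw0)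
      have h2 : ψ₁ y + ψ₂ 0 = 0 :=
        tendsto_nhds_unique h1 (tendsto_const_nhds.congr (fun γ => (hzero γ).symm))
      exact hfne (by rw [hdecomp]; exact h2)
    obtain ⟨z, hz1, hz2⟩ := hyG
    have hxy : x - y ∈ (LinearMap.range L).topologicalClosure := by
      by_contra hnot
      obtain ⟨f, hf0, hfne⟩ := aux_sep_closed_submodule _
        (Submodule.isClosed_topologicalClosure _) hnot
      have hzero : ∀ᶠ γ in (U : Filter ℝ), f (x - ((w γ : D) : B)) = 0 := by
        filter_upwards [hUpos] with γ hγ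
        refine hf0 _ (Submodule.le_topologicalClosure _ ?_)
        rw [hwx γ hγ]
        exact ⟨v' γ, rfl⟩
      have h1 : Tendsto (fun γ => f (x - ((w γ : D) : B))) (U : Filter ℝ)
          (𝓝 (f (x - y))) := by
        have h : Tendsto (fun γ => f x - f ((w γ : D) : B)) (U : Filter ℝ)
            (𝓝 (f x - f y)) := tendsto_const_nhds.sub (hwy f)
        rw [← map_sub] at h
        exact h.congr fun γ => (map_sub f x _).symm
      exact hfne (tendsto_nhds_unique h1
        (tendsto_const_nhds.congr' (hzero.mono fun γ h => h.symm)))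
    exact ⟨y, Submodule.mem_map.2 ⟨z, LinearMap.mem_ker.2 hz2, hz1⟩, hxy⟩
  -- conclusion
  have htop : (LinearMap.ker L).map D.subtype ⊔ (LinearMap.range L).topologicalClosure = ⊤ := by
    rw [eq_top_iff]
    intro x _
    obtain ⟨y, hy1, hy2⟩ := key x
    have := Submodule.add_mem _ (Submodule.mem_sup_left hy1) (Submodule.mem_sup_right hy2)
    simpa using this
  constructor
  · intro x
    obtain ⟨y, hy1, hy2⟩ := key x
    have hy2' : x - y ∈ closure ((LinearMap.range L : Submodule ℂ B) : Set B) := by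
      rwa [← Submodule.topologicalClosure_coe]
    have hmaps : Set.MapsTo (fun b : B => y + b)
        ((LinearMap.range L : Submodule ℂ B) : Set B)
        ((((LinearMap.ker L).map D.subtype ⊔ LinearMap.range L : Submodule ℂ B)) : Set B) :=
      fun b hb => Submodule.add_mem _ (Submodule.mem_sup_left hy1) (Submodule.mem_sup_right hb)
    have hcont : Continuous fun b : B => y + b := by fun_prop
    have := map_mem_closure hcont hy2' hmaps
    simpa using this
  · exact fun _ => htop
end

section
/- Adiabatic expansion for driven Markov processes. Let d ≥ 1 and let L(s), 0 ≤ s ≤ 1, be a C³ family of real d×d matrices such that for each s: L_{ij}(s) ≥ 0 for i ≠ j and L_{jj}(s) = −Σ_{i≠j} L_{ij}(s) (columns sum to zero), and 0 is a simple eigenvalue of L(s) with a unique stationary probability distribution π(s) (π_i(s) ≥ 0, Σ_i π_i(s) = 1, L(s)π(s) = 0), depending C³ on s, with ker L(s) = span{π(s)} and ran L(s) = {p ∈ ℝ^d : Σ_i p_i = 0}. Let P(s) be the projection onto span{π(s)} along ran L(s) (explicitly P(s)_{ij} = π_i(s)) and let A(s) = L(s)⁻¹ denote the reduced inverse, the unique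 matrix with A(s)L(s) = L(s)A(s) = 1 − P(s) and A(s)P(s) = P(s)A(s) = 0. Assume π̇(0) = 0. Then there is a constant C such that for all ε ∈ (0,1], the solution p_ε of ε ṗ(s) = L(s)p(s) with p(0) = π(0) satisfies ‖p_ε(s) − π(s) − ε A(s)π̇(s)‖ ≤ C ε² for all s ∈ [0,1]. -/
open Set Finset

open Filter Topology

set_option maxHeartbeats 1000000

lemma adia_contDiffOn_det {d : ℕ} {n : ℕ} {M : ℝ → Matrix (Fin d) (Fin d) ℝ} {s : Set ℝ}
    (h : ∀ i j, ContDiffOn ℝ n (fun t => M t i j) s) :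
    ContDiffOn ℝ n (fun t => (M t).det) s := by
  have : (fun t => (M t).det)
      = fun t => ∑ σ : Equiv.Perm (Fin d), ((Equiv.Perm.sign σ : ℤ) : ℝ) * ∏ i, M t (σ i) i := by
    funext t
    rw [Matrix.det_apply]
    simp only [Units.smul_def, zsmul_eq_mul]
  rw [this]
  apply ContDiffOn.sum
  intro σ _
  exact contDiffOn_const.mul (contDiffOn_prod (fun i _ => h (σ i) i))

lemma adia_contDiffOn_inv {d : ℕ} {n : ℕ} {M : ℝ → Matrix (Fin d) (Fin d) ℝ} {s : Set ℝ}
    (h : ∀ i j, ContDiffOn ℝ n (fun t => M t i j) s)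
    (hdet : ∀ t ∈ s, (M t).det ≠ 0) :
    ∀ i j, ContDiffOn ℝ n (fun t => (M t)⁻¹ i j) s := by
  intro i j
  have hadj : ContDiffOn ℝ n (fun t => (M t).adjugate i j) s := by
    have : (fun t => (M t).adjugate i j)
        = fun t => ((M t).updateRow j (Pi.single i 1)).det := by
      funext t; rw [Matrix.adjugate_apply]
    rw [this]
    apply adia_contDiffOn_det
    intro k l
    rcases eq_or_ne k j with rfl | hk
    · simpa [Matrix.updateRow_apply] using
        contDiffOn_const (c := Pi.single (M := fun _ : Fin d => ℝ) i 1 l)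
    · simpa [Matrix.updateRow_apply, hk] using h k l
  have : ∀ t ∈ s, (M t)⁻¹ i j = ((M t).det)⁻¹ * (M t).adjugate i j := by
    intro t ht
    rw [Matrix.inv_def, Ring.inverse_eq_inv']
    rfl
  exact (((adia_contDiffOn_det h).inv hdet).mul hadj).congr this

/-- `ℓ¹` norm bound for nonnegative matrices with unit column sums. -/
lemma adia_l1_contract {d : ℕ} (K : Matrix (Fin d) (Fin d) ℝ)
    (hpos : ∀ i j, 0 ≤ K i j) (hcol : ∀ j, ∑ i, K i j = 1) (x : Fin d → ℝ) :
    ∑ i, |K.mulVec x i| ≤ ∑ i, |x i| := by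
  have h1 : ∀ i, |K.mulVec x i| ≤ ∑ j, K i j * |x j| := by
    intro i
    calc |K.mulVec x i| = |∑ j, K i j * x j| := rfl
    _ ≤ ∑ j, |K i j * x j| := Finset.abs_sum_le_sum_abs _ _
    _ = ∑ j, K i j * |x j| := by
      refine Finset.sum_congr rfl fun j _ => ?_
      rw [abs_mul, abs_of_nonneg (hpos i j)]
  calc ∑ i, |K.mulVec x i| ≤ ∑ i, ∑ j, K i j * |x j| :=
        Finset.sum_le_sum fun i _ => h1 i
  _ = ∑ j, (∑ i, K i j) * |x j| := by
      rw [Finset.sum_comm]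
      exact Finset.sum_congr rfl fun j _ => (Finset.sum_mul _ _ _).symm
  _ = ∑ j, |x j| := by simp [hcol]


/-- **Adiabatic expansion for driven Markov processes.**  Let `L s` be a `C³`
family of generators of continuous-time Markov processes on a finite state space of `d`
elements (off-diagonal entries nonnegative, columns summing to zero), each with a unique
stationary probability distribution `π s`, with `ker (L s) = span {π s}` and
`ran (L s) = {p : ∑ p_i = 0}`.  Let `P s` be the projection with entries `P_{ij} = π_i`
and `A s` the reduced inverse of `L s`.  If `π̇ 0 = 0`, then the solution of
`ε ṗ = L s p`, `p 0 = π 0`, satisfies `‖p ε s − π s − ε A s π̇ s‖ ≤ C ε²` uniformly in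
`s ∈ [0,1]` and `ε ∈ (0,1]`. -/
theorem driven_markov_adiabatic_expansion
    (d : ℕ) (hd : 1 ≤ d)
    (L : ℝ → Matrix (Fin d) (Fin d) ℝ)
    (A : ℝ → Matrix (Fin d) (Fin d) ℝ)
    (π π' : ℝ → Fin d → ℝ)
    (p : ℝ → ℝ → Fin d → ℝ)
    -- `L` is a `C³` family of Markov generators
    (hLsmooth : ∀ i j, ContDiffOn ℝ 3 (fun s => L s i j) (Icc (0:ℝ) 1))
    (hoffdiag : ∀ s ∈ Icc (0:ℝ) 1, ∀ i j, i ≠ j → 0 ≤ L s i j)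
    (hcolsum : ∀ s ∈ Icc (0:ℝ) 1, ∀ j, ∑ i, L s i j = 0)
    -- `π s` is the unique stationary probability distribution, depending `C³` on `s`
    (hπsmooth : ContDiffOn ℝ 3 π (Icc (0:ℝ) 1))
    (hπ' : ∀ s ∈ Icc (0:ℝ) 1, HasDerivAt π (π' s) s)
    (hπnonneg : ∀ s ∈ Icc (0:ℝ) 1, ∀ i, 0 ≤ π s i)
    (hπsum : ∀ s ∈ Icc (0:ℝ) 1, ∑ i, π s i = 1)
    (hπstat : ∀ s ∈ Icc (0:ℝ) 1, (L s).mulVec (π s) = 0)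
    -- `ker (L s) = span {π s}` and `ran (L s) = {p : ∑ᵢ pᵢ = 0}`
    (hker : ∀ s ∈ Icc (0:ℝ) 1, ∀ q : Fin d → ℝ,
      (L s).mulVec q = 0 → ∃ c : ℝ, q = c • π s)
    (hran : ∀ s ∈ Icc (0:ℝ) 1,
      {q : Fin d → ℝ | ∃ v, (L s).mulVec v = q} = {q : Fin d → ℝ | ∑ i, q i = 0})
    -- `A s` is the reduced inverse of `L s` (with `P s` the matrix `P_{ij} = π_i(s)`)
    (hAL : ∀ s ∈ Icc (0:ℝ) 1,
      A s * L s = 1 - Matrix.of (fun i _ : Fin d => π s i))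
    (hLA : ∀ s ∈ Icc (0:ℝ) 1,
      L s * A s = 1 - Matrix.of (fun i _ : Fin d => π s i))
    (hAP : ∀ s ∈ Icc (0:ℝ) 1, A s * Matrix.of (fun i _ : Fin d => π s i) = 0)
    (hPA : ∀ s ∈ Icc (0:ℝ) 1, Matrix.of (fun i _ : Fin d => π s i) * A s = 0)
    -- `π̇ 0 = 0`
    (hπ'0 : π' 0 = 0)
    -- `p ε` solves `ε ṗ = L s p` with `p 0 = π 0`
    (hp0 : ∀ ε ∈ Ioc (0:ℝ) 1, p ε 0 = π 0)
    (hpode : ∀ ε ∈ Ioc (0:ℝ) 1, ∀ s ∈ Icc (0:ℝ) 1,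
      HasDerivAt (p ε) (ε⁻¹ • (L s).mulVec (p ε s)) s) :
    ∃ C : ℝ, ∀ ε ∈ Ioc (0:ℝ) 1, ∀ s ∈ Icc (0:ℝ) 1,
      ‖p ε s - π s - ε • (A s).mulVec (π' s)‖ ≤ C * ε ^ 2 := by
  classical
  set S : Set ℝ := Icc (0:ℝ) 1 with hSdef
  have hUD : UniqueDiffOn ℝ S := uniqueDiffOn_Icc one_pos
  set Pm : ℝ → Matrix (Fin d) (Fin d) ℝ := fun s => Matrix.of (fun i _ : Fin d => π s i)
    with hPmdef
  set Mm : ℝ → Matrix (Fin d) (Fin d) ℝ := fun s => L s + Pm s with hMmdef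
  -- ## algebraic identities
  have hLP : ∀ s ∈ S, L s * Pm s = 0 := by
    intro s hs
    ext i k
    have := congrFun (hπstat s hs) i
    simpa [Matrix.mul_apply, hPmdef, Matrix.mulVec, dotProduct] using this
  have hPL : ∀ s ∈ S, Pm s * L s = 0 := by
    intro s hs
    ext i k
    simp [Matrix.mul_apply, hPmdef, ← Finset.mul_sum, hcolsum s hs k]
  have hPP : ∀ s ∈ S, Pm s * Pm s = Pm s := by
    intro s hs
    ext i k
    simp [Matrix.mul_apply, hPmdef, ← Finset.mul_sum, hπsum s hs]
  have hMright : ∀ s ∈ S, Mm s * (A s + Pm s) = 1 := by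
    intro s hs
    have : Mm s * (A s + Pm s)
        = L s * A s + L s * Pm s + (Pm s * A s + Pm s * Pm s) := by
      simp [hMmdef, mul_add, add_mul]; abel
    rw [this, hLA s hs, hLP s hs, hPA s hs, hPP s hs]
    simp [hPmdef]
  have hMinv : ∀ s ∈ S, (Mm s)⁻¹ = A s + Pm s := fun s hs =>
    Matrix.inv_eq_right_inv (hMright s hs)
  have hdet : ∀ s ∈ S, (Mm s).det ≠ 0 := fun s hs =>
    (Matrix.isUnit_det_of_right_inverse (hMright s hs)).ne_zero
  -- ## smoothness facts
  have hπi : ∀ i, ContDiffOn ℝ 3 (fun s => π s i) S := fun i => contDiffOn_pi.mp hπsmooth i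
  have hπ'i : ∀ s ∈ S, ∀ i, HasDerivAt (fun u => π u i) (π' s i) s := by
    intro s hs i
    exact (hasDerivAt_pi.mp (hπ' s hs)) i
  have hπ'smooth : ∀ i, ContDiffOn ℝ 2 (fun s => π' s i) S := by
    intro i
    have h1 : ContDiffOn ℝ 2 (derivWithin (fun s => π s i) S) S :=
      (hπi i).derivWithin hUD (by norm_num)
    apply h1.congr
    intro s hs
    exact (((hπ'i s hs i).hasDerivWithinAt).derivWithin (hUD s hs)).symm
  have hπ'sum : ∀ s ∈ S, ∑ i, π' s i = 0 := by
    intro s hs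
    have h1 : HasDerivWithinAt (fun u => ∑ i, π u i) (∑ i, π' s i) S s :=
      (HasDerivAt.fun_sum (fun i _ => hπ'i s hs i)).hasDerivWithinAt
    have h2 : HasDerivWithinAt (fun _ : ℝ => (1:ℝ)) (∑ i, π' s i) S s :=
      h1.congr (fun u hu => (hπsum u hu).symm) ((hπsum s hs).symm)
    have h3 := h2.derivWithin (hUD s hs)
    have h4 : derivWithin (fun _ : ℝ => (1:ℝ)) S s = 0 :=
      (hasDerivWithinAt_const s S (1:ℝ)).derivWithin (hUD s hs)
    rw [h4] at h3
    exact h3.symm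
  have hMsmooth : ∀ i j, ContDiffOn ℝ 3 (fun s => Mm s i j) S := by
    intro i j
    have : (fun s => Mm s i j) = fun s => L s i j + π s i := by
      funext s; simp [hMmdef, hPmdef]
    rw [this]
    exact (hLsmooth i j).add (hπi i)
  -- F = Mm⁻¹ - Pm agrees with A on S and has C³ entries
  set F : ℝ → Matrix (Fin d) (Fin d) ℝ := fun s => (Mm s)⁻¹ - Pm s with hFdef
  have hFA : ∀ s ∈ S, F s = A s := by
    intro s hs
    rw [hFdef]
    simp [hMinv s hs]
  have hFsmooth : ∀ i j, ContDiffOn ℝ 3 (fun s => F s i j) S := by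
    intro i j
    have : (fun s => F s i j) = fun s => (Mm s)⁻¹ i j - π s i := by
      funext s; simp [hFdef, hPmdef]
    rw [this]
    exact (adia_contDiffOn_inv hMsmooth hdet i j).sub (hπi i)
  -- ## the correction terms y = A π̇, z = A (A π̇)'
  set y : ℝ → Fin d → ℝ := fun s => (F s).mulVec (π' s) with hydef
  set g : ℝ → Fin d → ℝ := fun s i => derivWithin (fun u => y u i) S s with hgdef
  set z : ℝ → Fin d → ℝ := fun s => (F s).mulVec (g s) with hzdef
  set g2 : ℝ → Fin d → ℝ := fun s i => derivWithin (fun u => z u i) S s with hg2def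
  have hysmooth : ∀ i, ContDiffOn ℝ 2 (fun s => y s i) S := by
    intro i
    have : (fun s => y s i) = fun s => ∑ j, F s i j * π' s j := by
      funext s; simp [hydef, Matrix.mulVec, dotProduct]
    rw [this]
    exact ContDiffOn.sum fun j _ => ((hFsmooth i j).of_le (by norm_num)).mul (hπ'smooth j)
  have hgsmooth : ∀ i, ContDiffOn ℝ 1 (fun s => g s i) S := by
    intro i
    exact (hysmooth i).derivWithin hUD (by norm_num)
  have hy' : ∀ s ∈ S, ∀ i, HasDerivWithinAt (fun u => y u i) (g s i) S s := by
    intro s hs i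
    exact (((hysmooth i).differentiableOn (by norm_num)) s hs).hasDerivWithinAt
  have hzsmooth : ∀ i, ContDiffOn ℝ 1 (fun s => z s i) S := by
    intro i
    have : (fun s => z s i) = fun s => ∑ j, F s i j * g s j := by
      funext s; simp [hzdef, Matrix.mulVec, dotProduct]
    rw [this]
    exact ContDiffOn.sum fun j _ => ((hFsmooth i j).of_le (by norm_num)).mul (hgsmooth j)
  have hz' : ∀ s ∈ S, ∀ i, HasDerivWithinAt (fun u => z u i) (g2 s i) S s := by
    intro s hs i
    exact (((hzsmooth i).differentiableOn (by norm_num)) s hs).hasDerivWithinAt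
  have hg2cont : ∀ i, ContinuousOn (fun s => g2 s i) S := by
    intro i
    have := (hzsmooth i).derivWithin hUD (m := 0) (by norm_num)
    exact contDiffOn_zero.mp this
  -- ## column sums of A vanish, hence sums of y, g, z vanish on S
  have hAcol : ∀ s ∈ S, ∀ j, ∑ i, A s i j = 0 := by
    intro s hs j
    obtain ⟨i0, hi0⟩ : ∃ i0, π s i0 ≠ 0 := by
      by_contra h
      push_neg at h
      have := hπsum s hs
      simp [h] at this
    have := congrFun (congrFun (hPA s hs) i0) j
    simp only [Matrix.mul_apply, hPmdef, Matrix.of_apply, Matrix.zero_apply,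
      ← Finset.mul_sum] at this
    exact (mul_eq_zero.mp this).resolve_left hi0
  have hFcol : ∀ s ∈ S, ∀ v : Fin d → ℝ, ∑ i, (F s).mulVec v i = 0 := by
    intro s hs v
    rw [hFA s hs]
    have : ∀ i, (A s).mulVec v i = ∑ j, A s i j * v j := fun i => rfl
    simp only [this]
    rw [Finset.sum_comm]
    refine Finset.sum_eq_zero fun j _ => ?_
    rw [← Finset.sum_mul, hAcol s hs j, zero_mul]
  have hysum : ∀ s ∈ S, ∑ i, y s i = 0 := fun s hs => hFcol s hs _
  have hgsum : ∀ s ∈ S, ∑ i, g s i = 0 := by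
    intro s hs
    have h1 : HasDerivWithinAt (fun u => ∑ i, y u i) (∑ i, g s i) S s :=
      HasDerivWithinAt.fun_sum (fun i _ => hy' s hs i)
    have h2 : HasDerivWithinAt (fun _ : ℝ => (0:ℝ)) (∑ i, g s i) S s :=
      h1.congr (fun u hu => (hysum u hu).symm) ((hysum s hs).symm)
    have h3 := h2.derivWithin (hUD s hs)
    have h4 : derivWithin (fun _ : ℝ => (0:ℝ)) S s = 0 :=
      (hasDerivWithinAt_const s S (0:ℝ)).derivWithin (hUD s hs)
    rw [h4] at h3
    exact h3.symm
  have hzsum : ∀ s ∈ S, ∑ i, z s i = 0 := fun s hs => hFcol s hs _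
  -- ## mulVec identities:  L y = π', L z = g on S
  have hPmv : ∀ s ∈ S, ∀ v : Fin d → ℝ, (∑ i, v i = 0) → (Pm s).mulVec v = 0 := by
    intro s hs v hv
    funext i
    simp [hPmdef, Matrix.mulVec, dotProduct, ← Finset.mul_sum, hv]
  have hLF : ∀ s ∈ S, ∀ v : Fin d → ℝ, (∑ i, v i = 0) →
      (L s).mulVec ((F s).mulVec v) = v := by
    intro s hs v hv
    rw [Matrix.mulVec_mulVec, hFA s hs, hLA s hs, Matrix.sub_mulVec, Matrix.one_mulVec,
      hPmv s hs v hv, sub_zero]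
  have hLy : ∀ s ∈ S, (L s).mulVec (y s) = π' s := fun s hs => hLF s hs _ (hπ'sum s hs)
  have hLz : ∀ s ∈ S, (L s).mulVec (z s) = g s := fun s hs => hLF s hs _ (hgsum s hs)
  -- ## uniform bounds by compactness
  have hScompact : IsCompact S := isCompact_Icc
  obtain ⟨Cz, hCz⟩ : ∃ C, ∀ s ∈ S, ∑ i, |z s i| ≤ C := by
    obtain ⟨C, hC⟩ := hScompact.exists_bound_of_continuousOn
      (f := fun s => ∑ i, |z s i|) (by
        apply continuousOn_finset_sum
        intro i _
        exact ((hzsmooth i).continuousOn).abs)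
    exact ⟨C, fun s hs => (le_abs_self _).trans ((Real.norm_eq_abs _) ▸ hC s hs)⟩
  obtain ⟨M₂, hM₂⟩ : ∃ C, ∀ s ∈ S, ∑ i, |g2 s i| ≤ C := by
    obtain ⟨C, hC⟩ := hScompact.exists_bound_of_continuousOn
      (f := fun s => ∑ i, |g2 s i|) (by
        apply continuousOn_finset_sum
        intro i _
        exact (hg2cont i).abs)
    exact ⟨C, fun s hs => (le_abs_self _).trans ((Real.norm_eq_abs _) ▸ hC s hs)⟩
  obtain ⟨Λ, hΛpos, hΛ⟩ : ∃ Λ, 0 < Λ ∧ ∀ s ∈ S, ∀ j, |L s j j| ≤ Λ := by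
    obtain ⟨C, hC⟩ := hScompact.exists_bound_of_continuousOn
      (f := fun s => ∑ j, |L s j j|) (by
        apply continuousOn_finset_sum
        intro j _
        exact ((hLsmooth j j).continuousOn).abs)
    refine ⟨C + 1, ?_, ?_⟩
    · have := hC 0 (by constructor <;> norm_num)
      have h0 : (0:ℝ) ≤ ∑ j, |L 0 j j| := Finset.sum_nonneg fun j _ => abs_nonneg _
      have := (le_abs_self _).trans ((Real.norm_eq_abs _) ▸ this)
      linarith
    · intro s hs j
      have h1 : |L s j j| ≤ ∑ k, |L s k k| :=
        Finset.single_le_sum (f := fun k => |L s k k|) (fun k _ => abs_nonneg _) (mem_univ j)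
      have h2 := (le_abs_self _).trans ((Real.norm_eq_abs _) ▸ hC s hs)
      linarith
  have hCz0 : 0 ≤ Cz := le_trans (Finset.sum_nonneg fun i _ => abs_nonneg _)
    (hCz 0 (by constructor <;> norm_num))
  have hM₂0 : 0 ≤ M₂ := le_trans (Finset.sum_nonneg fun i _ => abs_nonneg _)
    (hM₂ 0 (by constructor <;> norm_num))
  -- ## the constant
  refine ⟨Cz + (M₂ + 1) + Cz, ?_⟩
  intro ε hε s hs
  have hε0 : (0:ℝ) < ε := hε.1
  -- the remainder w = p − (π + ε y + ε² z)
  set w : ℝ → Fin d → ℝ := fun u => p ε u - π u - (ε • y u + (ε^2) • z u) with hwdef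
  -- derivative of w within S
  have hw' : ∀ u ∈ S, HasDerivWithinAt w
      (ε⁻¹ • (L u).mulVec (w u) - (ε^2) • g2 u) S u := by
    intro u hu
    have hyv : HasDerivWithinAt y (g u) S u := hasDerivWithinAt_pi.mpr (hy' u hu)
    have hzv : HasDerivWithinAt z (g2 u) S u := hasDerivWithinAt_pi.mpr (hz' u hu)
    have h := (((hpode ε hε u hu).hasDerivWithinAt).sub (hπ' u hu).hasDerivWithinAt).sub
      ((hyv.const_smul ε).add (hzv.const_smul (ε^2)))
    convert h using 1
    case e'_4 => rfl
    case e'_5 => rfl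
    case e'_6 => rfl
    case e'_8 => rfl
    have hmv : (L u).mulVec (w u)
        = (L u).mulVec (p ε u) - ((ε • π' u) + (ε^2) • g u) := by
      rw [hwdef]
      simp only [Matrix.mulVec_sub, Matrix.mulVec_add, Matrix.mulVec_smul,
        hπstat u hu, hLy u hu, hLz u hu]
      abel
    rw [hmv]
    have hε' : ε⁻¹ * ε = 1 := inv_mul_cancel₀ (ne_of_gt hε0)
    funext i
    simp only [Pi.smul_apply, Pi.sub_apply, Pi.add_apply, smul_eq_mul]
    field_simp
    ring
  have hwcont : ContinuousOn w S := fun u hu => (hw' u hu).continuousWithinAt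
  -- value at 0
  have hw0 : ∀ i, |w 0 i| = ε^2 * |z 0 i| := by
    intro i
    have h0S : (0:ℝ) ∈ S := by constructor <;> norm_num
    have hy0 : y 0 = 0 := by
      rw [hydef]
      simp only [hπ'0]
      exact Matrix.mulVec_zero _
    simp [hwdef, hp0 ε hε, hy0, abs_mul, abs_of_nonneg (sq_nonneg ε)]
  -- ℓ¹ bound via the fencing lemma
  have hNcont : ContinuousOn (fun u => ∑ i, |w u i|) S := by
    apply continuousOn_finset_sum
    intro i _
    exact ((continuous_apply i).comp_continuousOn hwcont).abs
  have hslope : ∀ u ∈ Ico (0:ℝ) 1, ∀ r, (ε^2 * M₂ + ε^2 : ℝ) < r →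
      ∃ᶠ ζ in 𝓝[>] u, slope (fun v => ∑ i, |w v i|) u ζ < r := by
    intro u hu r hr
    have huS : u ∈ S := ⟨hu.1, hu.2.le⟩
    set w' : Fin d → ℝ := ε⁻¹ • (L u).mulVec (w u) - (ε^2) • g2 u with hw'def
    have ht : Filter.Tendsto (slope w u) (𝓝[>] u) (𝓝 w') := by
      have h1 : Filter.Tendsto (slope w u) (𝓝[S \ {u}] u) (𝓝 w') :=
        hasDerivWithinAt_iff_tendsto_slope.mp (hw' u huS)
      have h2 : 𝓝[Ioc u 1] u ≤ 𝓝[S \ {u}] u := nhdsWithin_mono _ (by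
        intro x hx
        refine ⟨⟨le_trans hu.1 hx.1.le, hx.2⟩, ?_⟩
        simp only [Set.mem_singleton_iff]
        exact ne_of_gt hx.1)
      rw [← nhdsWithin_Ioc_eq_nhdsGT hu.2]
      exact h1.mono_left h2
    set δ : ℝ := (r - ε^2 * M₂ - ε^2) / (d + 1) with hδdef
    have hδ0 : 0 < δ := by
      apply div_pos (by linarith) (by positivity)
    have hd1 : ε^2 * M₂ + (d:ℝ) * δ < r := by
      have : (d:ℝ) * δ ≤ ((d:ℝ) + 1) * δ := by nlinarith
      have h2 : ((d:ℝ) + 1) * δ = r - ε^2 * M₂ - ε^2 := by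
        rw [hδdef]; field_simp
      nlinarith [sq_nonneg ε, hε0]
    -- eventually conditions
    have hev1 : ∀ᶠ ζ in 𝓝[>] u, ζ ∈ Ioc u (min 1 (u + ε / Λ)) :=
      Ioc_mem_nhdsGT_of_mem ⟨le_rfl, lt_min hu.2 (by
        have : 0 < ε / Λ := div_pos hε0 hΛpos
        linarith)⟩
    have hev2 : ∀ᶠ ζ in 𝓝[>] u, ‖slope w u ζ - w'‖ < δ := by
      have := ht (Metric.ball_mem_nhds w' hδ0)
      filter_upwards [this] with ζ hζ
      simpa [dist_eq_norm] using hζ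
    apply Filter.Eventually.frequently
    filter_upwards [hev1, hev2] with ζ hζ1 hζ2
    -- now the pointwise estimate
    set h : ℝ := ζ - u with hhdef
    have hh0 : 0 < h := by simp [hhdef]; linarith [hζ1.1]
    have hζS : ζ ∈ S := ⟨le_trans hu.1 (le_of_lt hζ1.1), le_trans hζ1.2 (min_le_left _ _)⟩
    have hhΛ : h * Λ ≤ ε := by
      have : ζ ≤ u + ε / Λ := le_trans hζ1.2 (min_le_right _ _)
      have : h ≤ ε / Λ := by simp [hhdef]; linarith
      calc h * Λ ≤ (ε / Λ) * Λ := by nlinarith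
      _ = ε := div_mul_cancel₀ _ (ne_of_gt hΛpos)
    -- the contraction matrix
    set K : Matrix (Fin d) (Fin d) ℝ := 1 + (h * ε⁻¹) • L u with hKdef
    have hKpos : ∀ i j, 0 ≤ K i j := by
      intro i j
      rcases eq_or_ne i j with rfl | hij
      · have hLii : -Λ ≤ L u i i := by
          have := hΛ u huS i
          rw [abs_le] at this
          exact this.1
        have h1 : h * ε⁻¹ * Λ ≤ 1 := by
          rw [← mul_le_mul_iff_of_pos_right hε0]
          calc h * ε⁻¹ * Λ * ε = (h * Λ) * (ε⁻¹ * ε) := by ring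
          _ = h * Λ := by rw [inv_mul_cancel₀ (ne_of_gt hε0), mul_one]
          _ ≤ ε := hhΛ
          _ = 1 * ε := (one_mul ε).symm
        have h2 : 0 ≤ h * ε⁻¹ := le_of_lt (mul_pos hh0 (inv_pos.mpr hε0))
        have : -(h * ε⁻¹ * Λ) ≤ h * ε⁻¹ * L u i i := by nlinarith
        simp [hKdef, Matrix.add_apply, Matrix.one_apply, Matrix.smul_apply, smul_eq_mul]
        linarith
      · have := hoffdiag u huS i j hij
        have h2 : 0 ≤ h * ε⁻¹ := le_of_lt (mul_pos hh0 (inv_pos.mpr hε0))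
        simp [hKdef, Matrix.add_apply, Matrix.one_apply, hij, Matrix.smul_apply, smul_eq_mul]
        positivity
    have hKcol : ∀ j, ∑ i, K i j = 1 := by
      intro j
      simp [hKdef, Matrix.add_apply, Matrix.smul_apply, Finset.sum_add_distrib,
        Matrix.one_apply, smul_eq_mul, ← Finset.mul_sum, hcolsum u huS j]
    have hKw : w u + h • (ε⁻¹ • (L u).mulVec (w u)) = K.mulVec (w u) := by
      rw [hKdef, Matrix.add_mulVec, Matrix.one_mulVec, Matrix.smul_mulVec]
      funext i
      simp [smul_eq_mul]
      ring
    -- estimate N (w ζ)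
    have hres : ∀ i, |w ζ i - (w u i + h * w' i)| ≤ h * δ := by
      intro i
      have hne : ζ - u ≠ 0 := by rw [← hhdef]; exact ne_of_gt hh0
      have e1 : h * (ζ - u)⁻¹ = 1 := by
        rw [hhdef]; exact mul_inv_cancel₀ hne
      have h1 : w ζ i - (w u i + h * w' i) = h * ((slope w u ζ - w') i) := by
        calc w ζ i - (w u i + h * w' i)
            = (h * (ζ - u)⁻¹) * (w ζ i - w u i) - h * w' i := by rw [e1]; ring
          _ = h * ((ζ - u)⁻¹ * (w ζ i - w u i) - w' i) := by ring
          _ = h * ((slope w u ζ - w') i) := by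
              rw [slope_def_module]
              simp only [Pi.sub_apply, Pi.smul_apply, smul_eq_mul]
      rw [h1, abs_mul, abs_of_pos hh0]
      have h2 : |(slope w u ζ - w') i| ≤ ‖slope w u ζ - w'‖ := by
        have := norm_le_pi_norm (slope w u ζ - w') i
        simpa [Real.norm_eq_abs] using this
      nlinarith [le_of_lt hζ2, norm_nonneg (slope w u ζ - w')]
    have hNmid : ∑ i, |w u i + h * w' i| ≤ (∑ i, |w u i|) + h * (ε^2 * M₂) := by
      have hsplit : ∀ i, |w u i + h * w' i|
          ≤ |K.mulVec (w u) i| + h * ε^2 * |g2 u i| := by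
        intro i
        have : w u i + h * w' i = K.mulVec (w u) i + (-(h * ε^2)) * g2 u i := by
          rw [← congrFun hKw i]
          simp [hw'def, smul_eq_mul]
          ring
        rw [this]
        calc |K.mulVec (w u) i + (-(h * ε^2)) * g2 u i|
            ≤ |K.mulVec (w u) i| + |(-(h * ε^2)) * g2 u i| := abs_add_le _ _
        _ = |K.mulVec (w u) i| + h * ε^2 * |g2 u i| := by
            rw [abs_mul, abs_neg, abs_of_nonneg (by positivity : (0:ℝ) ≤ h * ε^2)]
      calc ∑ i, |w u i + h * w' i|
          ≤ ∑ i, (|K.mulVec (w u) i| + h * ε^2 * |g2 u i|) :=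
            Finset.sum_le_sum fun i _ => hsplit i
      _ = (∑ i, |K.mulVec (w u) i|) + h * ε^2 * ∑ i, |g2 u i| := by
          rw [Finset.sum_add_distrib, Finset.mul_sum]
      _ ≤ (∑ i, |w u i|) + h * ε^2 * ∑ i, |g2 u i| := by
          have := adia_l1_contract K hKpos hKcol (w u)
          linarith
      _ ≤ (∑ i, |w u i|) + h * (ε^2 * M₂) := by
          have h1 := hM₂ u huS
          have h2 : (0:ℝ) ≤ h * ε^2 := by positivity
          nlinarith
    have hNζ : ∑ i, |w ζ i| ≤ (∑ i, |w u i|) + h * (ε^2 * M₂) + h * ((d:ℝ) * δ) := by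
      have h1 : ∀ i, |w ζ i| ≤ |w u i + h * w' i| + h * δ := by
        intro i
        have h2 := hres i
        calc |w ζ i| = |(w u i + h * w' i) + (w ζ i - (w u i + h * w' i))| := by
              congr 1; ring
        _ ≤ |w u i + h * w' i| + |w ζ i - (w u i + h * w' i)| := abs_add_le _ _
        _ ≤ |w u i + h * w' i| + h * δ := by linarith
      have hdh : ((Finset.univ : Finset (Fin d)).card : ℝ) * (h * δ) = h * ((d:ℝ) * δ) := by
        simp [Finset.card_univ, Fintype.card_fin]
        ring
      calc ∑ i, |w ζ i| ≤ ∑ i, (|w u i + h * w' i| + h * δ) :=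
            Finset.sum_le_sum fun i _ => h1 i
      _ = (∑ i, |w u i + h * w' i|) + ((Finset.univ : Finset (Fin d)).card : ℝ) * (h * δ) := by
          rw [Finset.sum_add_distrib, Finset.sum_const, nsmul_eq_mul]
      _ ≤ (∑ i, |w u i|) + h * (ε^2 * M₂) + h * ((d:ℝ) * δ) := by
          rw [hdh]; linarith [hNmid]
    -- final slope bound
    have hζu : slope (fun v => ∑ i, |w v i|) u ζ
        = ((∑ i, |w ζ i|) - ∑ i, |w u i|) / h := by
      rw [slope_def_field]
    rw [hζu]
    rw [div_lt_iff₀ hh0]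
    calc (∑ i, |w ζ i|) - ∑ i, |w u i| ≤ h * (ε^2 * M₂) + h * ((d:ℝ) * δ) := by linarith
    _ = (ε^2 * M₂ + (d:ℝ) * δ) * h := by ring
    _ < r * h := by
        apply mul_lt_mul_of_pos_right hd1 hh0
  have hmain : ∀ u ∈ S, ∑ i, |w u i| ≤ (∑ i, |w 0 i|) + (ε^2 * M₂ + ε^2) * u := by
    intro u hu
    have := image_le_of_liminf_slope_right_le_deriv_boundary
      (f := fun v => ∑ i, |w v i|) (a := 0) (b := 1) hNcont
      (B := fun v => (∑ i, |w 0 i|) + (ε^2 * M₂ + ε^2) * v)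
      (B' := fun _ => ε^2 * M₂ + ε^2)
      (by simp)
      (by fun_prop)
      (by
        intro x hx
        exact (((hasDerivWithinAt_id x (Ici x)).const_mul _).const_add _).congr_deriv
          (by ring))
      (fun x hx r hr => hslope x hx r hr)
    exact this hu
  -- conclusion
  have h0S : (0:ℝ) ∈ S := by constructor <;> norm_num
  have hrw : p ε s - π s - ε • (A s).mulVec (π' s) = w s + (ε^2) • z s := by
    have hAy : (A s).mulVec (π' s) = y s := by
      rw [hydef]
      simp only [hFA s hs]
    rw [hAy]
    funext i
    simp only [hwdef, Pi.add_apply, Pi.sub_apply, Pi.smul_apply, smul_eq_mul]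
    ring
  rw [hrw]
  have hnorm : ‖w s + (ε^2) • z s‖ ≤ ∑ i, |w s i + ε^2 * z s i| := by
    refine (pi_norm_le_iff_of_nonneg (Finset.sum_nonneg fun i _ => abs_nonneg _)).mpr ?_
    intro i
    have he : ‖(w s + (ε^2) • z s) i‖ = |w s i + ε^2 * z s i| := by
      simp [smul_eq_mul, Real.norm_eq_abs]
    rw [he]
    exact Finset.single_le_sum (f := fun j => |w s j + ε^2 * z s j|)
      (fun j _ => abs_nonneg _) (mem_univ i)
  have hsum1 : ∑ i, |w s i + ε^2 * z s i| ≤ (∑ i, |w s i|) + ε^2 * ∑ i, |z s i| := by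
    calc ∑ i, |w s i + ε^2 * z s i| ≤ ∑ i, (|w s i| + ε^2 * |z s i|) := by
          refine Finset.sum_le_sum fun i _ => ?_
          calc |w s i + ε^2 * z s i| ≤ |w s i| + |ε^2 * z s i| := abs_add_le _ _
          _ = |w s i| + ε^2 * |z s i| := by
              rw [abs_mul, abs_of_nonneg (sq_nonneg ε)]
    _ = (∑ i, |w s i|) + ε^2 * ∑ i, |z s i| := by
        rw [Finset.sum_add_distrib, Finset.mul_sum]
  have hw0sum : ∑ i, |w 0 i| ≤ ε^2 * Cz := by
    calc ∑ i, |w 0 i| = ε^2 * ∑ i, |z 0 i| := by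
          rw [Finset.mul_sum]
          exact Finset.sum_congr rfl fun i _ => hw0 i
    _ ≤ ε^2 * Cz := by nlinarith [hCz 0 h0S, sq_nonneg ε]
  have hmains := hmain s hs
  have hzs := hCz s hs
  have hεsq : (0:ℝ) < ε^2 := by positivity
  have hstep : (ε^2 * M₂ + ε^2) * s ≤ ε^2 * M₂ + ε^2 := by
    have hM : (0:ℝ) ≤ ε^2 * M₂ + ε^2 := by positivity
    nlinarith [hs.1, hs.2]
  calc ‖w s + (ε^2) • z s‖ ≤ ∑ i, |w s i + ε^2 * z s i| := hnorm
  _ ≤ (∑ i, |w s i|) + ε^2 * ∑ i, |z s i| := hsum1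
  _ ≤ ((∑ i, |w 0 i|) + (ε^2 * M₂ + ε^2) * s) + ε^2 * Cz := by nlinarith
  _ ≤ (ε^2 * Cz + (ε^2 * M₂ + ε^2)) + ε^2 * Cz := by linarith
  _ = (Cz + (M₂ + 1) + Cz) * ε ^ 2 := by ring
end

section
/- Characterization of dephasing Lindbladians, part 1. Let 𝓗 be a complex Hilbert space, let H ∈ B(𝓗) be a bounded self-adjoint operator, and let Γ_1, …, Γ_m ∈ B(𝓗). Define the Heisenberg-picture generator L_*(a) = i[H,a] + ½ Σ_{α=1}^m ( 2 Γ_α* a Γ_α − Γ_α*Γ_α a − a Γ_α*Γ_α ) for a ∈ B(𝓗). Suppose that L_*(a) = 0 for every a ∈ B(𝓗) commuting with H (i.e. ker L_* contains the commutant {H}' = {a ∈ B(𝓗) : Ha = aH}). Then each Γ_α belongs to the bicommutant of H: Γ_α a = a Γ_α for every a ∈ B(𝓗) with Ha = aH. -/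
open Finset

lemma diss_aux {R : Type*} [Ring R] [StarRing R] [Algebra ℂ R] (a g : R) :
    star (a * g - g * a) * (a * g - g * a) + star (a * g - g * a) * (a * g - g * a) =
      ((2:ℂ) • (star g * (star a * a) * g) - star g * g * (star a * a)
          - (star a * a) * (star g * g))
      - star a * ((2:ℂ) • (star g * a * g) - star g * g * a - a * (star g * g))
      - ((2:ℂ) • (star g * star a * g) - star g * g * star a - star a * (star g * g)) * a := by
  simp only [two_smul, star_sub, star_mul, star_star]
  noncomm_ring


/-- **Characterization of dephasing Lindbladians, part 1.**  Let `H` be a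
bounded self-adjoint operator on a complex Hilbert space `𝓗` and `Γ_1, …, Γ_m` bounded
operators.  If the Heisenberg generator
`L_*(a) = i[H,a] + ½ ∑_α (2 Γ_α* a Γ_α − Γ_α*Γ_α a − a Γ_α*Γ_α)` annihilates every
bounded operator commuting with `H`, then every `Γ_α` lies in the bicommutant of `H`:
`Γ_α` commutes with every bounded operator commuting with `H`. -/
theorem dephasing_lindbladian_heisenberg
    {𝓗 : Type*} [NormedAddCommGroup 𝓗] [InnerProductSpace ℂ 𝓗] [CompleteSpace 𝓗]
    (H : 𝓗 →L[ℂ] 𝓗) (hH : IsSelfAdjoint H)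
    (m : ℕ) (Γ : Fin m → 𝓗 →L[ℂ] 𝓗)
    -- `ker L_*` contains the commutant of `H`
    (hker : ∀ a : 𝓗 →L[ℂ] 𝓗, H * a = a * H →
      Complex.I • (H * a - a * H) +
        (2:ℂ)⁻¹ • ∑ α, ((2:ℂ) • (star (Γ α) * a * Γ α)
          - star (Γ α) * Γ α * a - a * (star (Γ α) * Γ α)) = 0) :
    ∀ α, ∀ a : 𝓗 →L[ℂ] 𝓗, H * a = a * H → Γ α * a = a * Γ α := by
  -- From `hker`, if `a` commutes with `H` then the dissipative sum vanishes
  have hS : ∀ a : 𝓗 →L[ℂ] 𝓗, H * a = a * H →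
      ∑ α, ((2:ℂ) • (star (Γ α) * a * Γ α)
          - star (Γ α) * Γ α * a - a * (star (Γ α) * Γ α)) = 0 := by
    intro a ha
    have h := hker a ha
    rw [sub_eq_zero.mpr ha, smul_zero, zero_add] at h
    have := congrArg (fun x => (2:ℂ) • x) h
    simpa [smul_smul] using this
  intro α a ha
  have ha' : H * star a = star a * H := by
    have := congrArg star ha
    simpa [star_mul, hH.star_eq] using this.symm
  have hb : H * (star a * a) = (star a * a) * H := by
    rw [← mul_assoc, ha', mul_assoc, ha, mul_assoc]
  have key : ∑ β, star (a * Γ β - Γ β * a) * (a * Γ β - Γ β * a) = 0 := by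
    have hsum : ∑ β, (star (a * Γ β - Γ β * a) * (a * Γ β - Γ β * a)
        + star (a * Γ β - Γ β * a) * (a * Γ β - Γ β * a)) =
        (∑ β, ((2:ℂ) • (star (Γ β) * (star a * a) * Γ β)
            - star (Γ β) * Γ β * (star a * a) - (star a * a) * (star (Γ β) * Γ β)))
        - star a * (∑ β, ((2:ℂ) • (star (Γ β) * a * Γ β)
            - star (Γ β) * Γ β * a - a * (star (Γ β) * Γ β)))
        - (∑ β, ((2:ℂ) • (star (Γ β) * star a * Γ β)
            - star (Γ β) * Γ β * star a - star a * (star (Γ β) * Γ β))) * a := by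
      rw [Finset.mul_sum, Finset.sum_mul, ← Finset.sum_sub_distrib, ← Finset.sum_sub_distrib]
      exact Finset.sum_congr rfl fun β _ => diss_aux a (Γ β)
    rw [hS _ hb, hS _ ha, hS _ ha', mul_zero, zero_mul, sub_zero, sub_zero,
      Finset.sum_add_distrib] at hsum
    calc ∑ β, star (a * Γ β - Γ β * a) * (a * Γ β - Γ β * a)
        = (2:ℂ)⁻¹ • (∑ β, star (a * Γ β - Γ β * a) * (a * Γ β - Γ β * a)
          + ∑ β, star (a * Γ β - Γ β * a) * (a * Γ β - Γ β * a)) := by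
          rw [← two_smul ℂ, smul_smul]; norm_num
      _ = 0 := by rw [hsum, smul_zero]
  have hterm := (Finset.sum_eq_zero_iff_of_nonneg
    (fun β _ => star_mul_self_nonneg (a * Γ β - Γ β * a))).mp key α (mem_univ α)
  have hc : a * Γ α - Γ α * a = 0 := by
    exact (CStarRing.star_mul_self_eq_zero_iff _).mp hterm
  linear_combination (norm := abel) -hc
end

section
/- Characterization of dephasing Lindbladians, part 2 (finite dimension). Let H be a Hermitian n×n complex matrix and let Γ_1, …, Γ_m be n×n matrices each of which is a function of H, i.e. Γ_α = f_α(H) obtained by applying a function f_α to H via the functional calculus (equivalently, each Γ_α is a polynomial in H). Define the Lindbladian L(ρ) = −i[H,ρ] + ½ Σ_{α=1}^m ( [Γ_α ρ, Γ_α*] + [Γ_α, ρ Γ_α*] ) on n×n matrices ρ. Then ker L = ker([H,·]): for every matrix ρ, L(ρ) = 0 if and only if [H,ρ] = 0. -/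
open Finset

/-- Conjugation by a unitary matrix, as an algebra homomorphism. -/
noncomputable def conjAH {n : ℕ} (U : Matrix (Fin n) (Fin n) ℂ)
    (h1 : U * star U = 1) (h2 : star U * U = 1) :
    Matrix (Fin n) (Fin n) ℂ →ₐ[ℂ] Matrix (Fin n) (Fin n) ℂ where
  toFun X := U * X * star U
  map_one' := by show U * 1 * star U = 1; rw [mul_one, h1]
  map_mul' X Y := by
    show U * (X * Y) * star U = (U * X * star U) * (U * Y * star U)
    simp only [Matrix.mul_assoc]
    rw [← Matrix.mul_assoc (star U) U, h2, Matrix.one_mul]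
  map_zero' := by show U * 0 * star U = 0; simp
  map_add' X Y := by
    show U * (X + Y) * star U = U * X * star U + U * Y * star U
    simp [Matrix.mul_add, Matrix.add_mul]
  commutes' c := by
    show U * algebraMap ℂ _ c * star U = algebraMap ℂ _ c
    simp [Algebra.algebraMap_eq_smul_one, Matrix.mul_smul, Matrix.smul_mul, h1]

lemma conjAH_apply {n : ℕ} (U : Matrix (Fin n) (Fin n) ℂ)
    (h1 : U * star U = 1) (h2 : star U * U = 1) (X : Matrix (Fin n) (Fin n) ℂ) :
    conjAH U h1 h2 X = U * X * star U := rfl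

lemma aeval_diagonal' {n : ℕ} (d : Fin n → ℂ) (p : Polynomial ℂ) :
    Polynomial.aeval (Matrix.diagonal d) p
      = Matrix.diagonal (fun i => p.eval (d i)) := by
  have h1 := Polynomial.aeval_algHom_apply (Matrix.diagonalAlgHom (n := Fin n) ℂ) d p
  simp only [Matrix.diagonalAlgHom_apply] at h1
  rw [h1]
  have h3 : (Polynomial.aeval d) p = fun i => p.eval (d i) := by
    funext i
    have h2 := Polynomial.aeval_algHom_apply (Pi.evalAlgHom ℂ (fun _ : Fin n => ℂ) i) d p
    simp only [Pi.evalAlgHom_apply] at h2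
    rw [← h2]
    exact congrFun (Polynomial.coe_aeval_eq_eval (d i)) p
  rw [h3]

lemma scalar_key (x y : ℝ) (m : ℕ) (v w : Fin m → ℂ)
    (hvw : x = y → v = w) (s : ℂ) :
    (s * (-Complex.I * ((x : ℂ) - y) + (2:ℂ)⁻¹ *
        ∑ α, (2 * v α * (starRingEnd ℂ) (w α) - (starRingEnd ℂ) (v α) * v α
          - (starRingEnd ℂ) (w α) * w α)) = 0)
      ↔ ((x : ℂ) - (y : ℂ)) * s = 0 := by
  set T : Fin m → ℂ := fun α => 2 * v α * (starRingEnd ℂ) (w α)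
      - (starRingEnd ℂ) (v α) * v α - (starRingEnd ℂ) (w α) * w α with hT
  set c : ℂ := -Complex.I * ((x : ℂ) - y) + (2:ℂ)⁻¹ * ∑ α, T α with hc
  by_cases hs : s = 0
  · simp [hs]
  · rw [mul_eq_zero, mul_eq_zero, or_iff_right hs, or_iff_left hs]
    constructor
    · intro h0
      have h1 : c + (starRingEnd ℂ) c = 0 := by rw [h0]; simp
      have h2 : c + (starRingEnd ℂ) c
          = ∑ α, ((2:ℂ)⁻¹ * T α + (2:ℂ)⁻¹ * (starRingEnd ℂ) (T α)) := by
        rw [hc]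
        simp only [map_add, map_mul, map_sum, map_sub, map_neg, map_inv₀, map_ofNat,
          Complex.conj_I, Complex.conj_ofReal]
        rw [Finset.sum_add_distrib, ← Finset.mul_sum, ← Finset.mul_sum]
        ring
      have h3 : ∀ α, (2:ℂ)⁻¹ * T α + (2:ℂ)⁻¹ * (starRingEnd ℂ) (T α)
          = -((Complex.normSq (v α - w α) : ℝ) : ℂ) := by
        intro α
        rw [Complex.normSq_eq_conj_mul_self, map_sub]
        simp only [hT, map_sub, map_mul, map_ofNat, Complex.conj_conj]
        ring
      have h4 : ∑ α, (Complex.normSq (v α - w α) : ℝ) = 0 := by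
        have hC : ((∑ α, (Complex.normSq (v α - w α) : ℝ) : ℝ) : ℂ) = 0 := by
          push_cast
          rw [← neg_eq_zero, ← Finset.sum_neg_distrib]
          simp_rw [← h3]
          rw [← h2, h1]
        exact_mod_cast hC
      have h5 : v = w := by
        funext α
        have hz := (Finset.sum_eq_zero_iff_of_nonneg
          (fun α _ => Complex.normSq_nonneg (v α - w α))).mp h4 α (Finset.mem_univ α)
        exact sub_eq_zero.mp (Complex.normSq_eq_zero.mp hz)
      have h7 : c = -Complex.I * ((x : ℂ) - y) := by
        rw [hc, Finset.sum_eq_zero, mul_zero, add_zero]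
        intro α _
        simp only [hT, h5]
        ring
      have h8 : -Complex.I * ((x : ℂ) - y) = 0 := h7 ▸ h0
      rcases mul_eq_zero.mp h8 with h | h
      · exact absurd (neg_eq_zero.mp h) Complex.I_ne_zero
      · exact h
    · intro h0
      have hxy : x = y := by exact_mod_cast sub_eq_zero.mp h0
      have hv : v = w := hvw hxy
      rw [hc, hxy, sub_self, mul_zero, zero_add, Finset.sum_eq_zero, mul_zero]
      intro α _
      simp only [hT, hv]
      ring

lemma entry_formula {n m : ℕ} (e' : Fin n → ℂ) (g : Fin m → Fin n → ℂ)
    (σ : Matrix (Fin n) (Fin n) ℂ) (j k : Fin n) :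
    (-Complex.I • (Matrix.diagonal e' * σ - σ * Matrix.diagonal e') + (2:ℂ)⁻¹ •
      ∑ α, ((Matrix.diagonal (g α) * σ) * Matrix.diagonal (star (g α))
        - Matrix.diagonal (star (g α)) * (Matrix.diagonal (g α) * σ)
        + (Matrix.diagonal (g α) * (σ * Matrix.diagonal (star (g α)))
          - (σ * Matrix.diagonal (star (g α))) * Matrix.diagonal (g α)))) j k
    = σ j k * (-Complex.I * (e' j - e' k) + (2:ℂ)⁻¹ *
        ∑ α, (2 * g α j * (starRingEnd ℂ) (g α k) - (starRingEnd ℂ) (g α j) * g α j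
          - (starRingEnd ℂ) (g α k) * g α k)) := by
  simp only [Matrix.add_apply, Matrix.smul_apply, Matrix.sub_apply, Matrix.sum_apply,
    Matrix.diagonal_mul, Matrix.mul_diagonal, smul_eq_mul, Pi.star_apply, Complex.star_def]
  rw [mul_add]
  congr 1
  · ring
  · rw [Finset.mul_sum, Finset.mul_sum, Finset.mul_sum]
    apply Finset.sum_congr rfl
    intro α _
    ring

/-- **Characterization of dephasing Lindbladians, part 2, finite dimension.**
Let `H` be a Hermitian `n×n` complex matrix and `Γ_1, …, Γ_m` matrices which are functions
of `H` (polynomials in `H`, equivalently functions of `H` by the functional calculus).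
Define the Lindbladian `L(ρ) = −i[H,ρ] + ½ ∑_α ([Γ_α ρ, Γ_α*] + [Γ_α, ρ Γ_α*])`.  Then
`ker L = ker [H,·]`: for every matrix `ρ`, `L ρ = 0` if and only if `[H, ρ] = 0`. -/
theorem dephasing_lindbladian_kernel_finite_dim
    (n : ℕ) (H : Matrix (Fin n) (Fin n) ℂ) (hH : H.IsHermitian)
    (m : ℕ) (Γ : Fin m → Matrix (Fin n) (Fin n) ℂ)
    -- each `Γ_α` is a function of `H`
    (hΓ : ∀ α, ∃ q : Polynomial ℂ, Γ α = Polynomial.aeval H q) :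
    ∀ ρ : Matrix (Fin n) (Fin n) ℂ,
      (-Complex.I • (H * ρ - ρ * H) +
        (2:ℂ)⁻¹ • ∑ α, ((Γ α * ρ) * star (Γ α) - star (Γ α) * (Γ α * ρ)
          + (Γ α * (ρ * star (Γ α)) - (ρ * star (Γ α)) * Γ α)) = 0)
      ↔ H * ρ = ρ * H := by
  intro ρ
  set U : Matrix (Fin n) (Fin n) ℂ := (hH.eigenvectorUnitary : Matrix (Fin n) (Fin n) ℂ)
    with hU
  have h1 : U * star U = 1 := Matrix.mem_unitaryGroup_iff.mp hH.eigenvectorUnitary.2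
  have h2 : star U * U = 1 := Matrix.mem_unitaryGroup_iff'.mp hH.eigenvectorUnitary.2
  set f := conjAH U h1 h2 with hf
  set e : Fin n → ℝ := hH.eigenvalues with he
  set D : Matrix (Fin n) (Fin n) ℂ := Matrix.diagonal (fun i => (e i : ℂ)) with hD
  have hspec : H = f D := by
    rw [hf, conjAH_apply, hD]
    exact hH.spectral_theorem
  set g : Fin m → Fin n → ℂ := fun α i => ((hΓ α).choose).eval ((e i : ℝ) : ℂ) with hg
  have hGamma : ∀ α, Γ α = f (Matrix.diagonal (g α)) := by
    intro α
    have ha := Polynomial.aeval_algHom_apply f D ((hΓ α).choose)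
    rw [← hspec] at ha
    rw [(hΓ α).choose_spec, ha, aeval_diagonal']
  have hGammaStar : ∀ α, star (Γ α) = f (Matrix.diagonal (star (g α))) := by
    intro α
    rw [hGamma α, hf, conjAH_apply, conjAH_apply, star_mul, star_mul, star_star,
      Matrix.star_eq_conjTranspose (Matrix.diagonal (g α)), Matrix.diagonal_conjTranspose,
      ← Matrix.mul_assoc]
  obtain ⟨σ, hσ⟩ : ∃ X : Matrix (Fin n) (Fin n) ℂ, X = star U * ρ * U := ⟨_, rfl⟩
  have hsur : ∀ X : Matrix (Fin n) (Fin n) ℂ, star U * f X * U = X := by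
    intro X
    rw [hf, conjAH_apply]
    simp only [← Matrix.mul_assoc]
    rw [h2, Matrix.one_mul, Matrix.mul_assoc, h2, Matrix.mul_one]
  have hρ : f σ = ρ := by
    rw [hσ, hf, conjAH_apply]
    simp only [← Matrix.mul_assoc]
    rw [h1, Matrix.one_mul, Matrix.mul_assoc, h1, Matrix.mul_one]
  have hf0 : ∀ X : Matrix (Fin n) (Fin n) ℂ, f X = 0 ↔ X = 0 := by
    intro X
    constructor
    · intro h
      rw [← hsur X, h, Matrix.mul_zero, Matrix.zero_mul]
    · intro h
      rw [h, map_zero]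
  have key : f (-Complex.I • (D * σ - σ * D) + (2:ℂ)⁻¹ •
      ∑ α, ((Matrix.diagonal (g α) * σ) * Matrix.diagonal (star (g α))
        - Matrix.diagonal (star (g α)) * (Matrix.diagonal (g α) * σ)
        + (Matrix.diagonal (g α) * (σ * Matrix.diagonal (star (g α)))
          - (σ * Matrix.diagonal (star (g α))) * Matrix.diagonal (g α))))
      = -Complex.I • (H * ρ - ρ * H) +
        (2:ℂ)⁻¹ • ∑ α, ((Γ α * ρ) * star (Γ α) - star (Γ α) * (Γ α * ρ)
          + (Γ α * (ρ * star (Γ α)) - (ρ * star (Γ α)) * Γ α)) := by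
    simp only [map_add, map_smul, map_sub, map_sum, map_mul, ← hGamma, ← hGammaStar,
      ← hspec, hρ]
  rw [← key, hf0]
  have hRHS : (H * ρ = ρ * H) ↔ (D * σ = σ * D) := by
    constructor
    · intro h
      have h3 : f (D * σ) = f (σ * D) := by rw [map_mul, map_mul, ← hspec, hρ, h]
      have h4 := congrArg (fun X => star U * X * U) h3
      simpa only [hsur] using h4
    · intro h
      rw [hspec, ← hρ, ← map_mul, ← map_mul, h]
  rw [hRHS, ← Matrix.ext_iff, ← Matrix.ext_iff]
  apply forall_congr'
  intro j
  apply forall_congr'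
  intro k
  rw [entry_formula, Matrix.zero_apply, hD, Matrix.diagonal_mul, Matrix.mul_diagonal]
  have hvw : e j = e k → (fun α => g α j) = (fun α => g α k) := by
    intro hjk
    funext α
    simp only [hg]
    rw [hjk]
  have hsk := scalar_key (e j) (e k) m (fun α => g α j) (fun α => g α k) hvw (σ j k)
  beta_reduce at hsk
  rw [hsk]
  constructor
  · intro h
    linear_combination h
  · intro h
    linear_combination h
end
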